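/- arXiv:2004.01955 — 3 statements merged into one kernel-verified Lean document; each statement's English description precedes it below -/
import Mathlib

section
/- A connected 2-edge-coloured graph G is eulerian (has a closed alternating trail using every edge) if and only if every vertex v has equal numbers of incident edges of colour 1 and of colour 2. -/
/-- A 2-edge-coloured (multi)graph: for each colour (`false` = colour 1 / red,
`true` = colour 2 / blue) a symmetric loopless adjacency relation. -/
structure TwoEC (V : Type) where
  adj : Bool → V → V → Prop
  symm : ∀ c u v, adj c u v → adj c v u
  loopless : ∀ c v, ¬ adj c v v

namespace TwoEC

variable {V : Type}

/-- A step of a walk: (source, colour, target). -/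
abbrev Step (V : Type) := V × Bool × V

def stepSrc (s : Step V) : V := s.1
def stepCol (s : Step V) : Bool := s.2.1
def stepTgt (s : Step V) : V := s.2.2
/-- The (coloured, undirected) edge used by a step. -/
def stepEdge (s : Step V) : Bool × Sym2 V := (s.2.1, Sym2.mk s.1 s.2.2)

/-- `L` is an alternating walk from `u` to `v` (nonempty list of steps,
consecutive steps share a vertex and differ in colour). -/
def IsAltWalk (G : TwoEC V) (u v : V) (L : List (Step V)) : Prop :=
  L ≠ [] ∧ L.head?.map stepSrc = some u ∧ L.getLast?.map stepTgt = some v ∧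
  (∀ s ∈ L, G.adj (stepCol s) (stepSrc s) (stepTgt s)) ∧
  L.Chain' (fun s t => stepTgt s = stepSrc t ∧ stepCol s ≠ stepCol t)

def firstColour (L : List (Step V)) : Option Bool := L.head?.map stepCol
def lastColour (L : List (Step V)) : Option Bool := L.getLast?.map stepCol

/-- An alternating trail: an alternating walk using no (coloured) edge twice. -/
def IsAltTrail (G : TwoEC V) (u v : V) (L : List (Step V)) : Prop :=
  G.IsAltWalk u v L ∧ (L.map stepEdge).Nodup

/-- An alternating path: an alternating walk with no repeated vertex. -/
def IsAltPath (G : TwoEC V) (u v : V) (L : List (Step V)) : Prop :=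
  G.IsAltWalk u v L ∧ (L.map stepSrc ++ [v]).Nodup

/-- A (nonempty) closed alternating trail: also the last and first colours differ. -/
def IsClosedAltTrail (G : TwoEC V) (L : List (Step V)) : Prop :=
  ∃ u, G.IsAltTrail u u L ∧ lastColour L ≠ firstColour L

/-- An alternating cycle: a closed alternating walk with pairwise distinct vertices. -/
def IsAltCycle (G : TwoEC V) (L : List (Step V)) : Prop :=
  (∃ u, G.IsAltWalk u u L) ∧ (L.map stepSrc).Nodup ∧ lastColour L ≠ firstColour L

/-- The walk `L` visits the vertex `v`. -/
def visits (L : List (Step V)) (v : V) : Prop := v ∈ L.map stepSrc ∨ v ∈ L.map stepTgt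

/-- A spanning closed alternating trail exists. -/
def Supereulerian (G : TwoEC V) : Prop :=
  ∃ L, G.IsClosedAltTrail L ∧ ∀ v : V, visits L v

/-- Colour-connectivity: between any two distinct vertices there are two alternating
paths whose union is an alternating closed walk (equivalently, they start with
different colours and end with different colours). -/
def ColourConnected (G : TwoEC V) : Prop :=
  ∀ u v : V, u ≠ v → ∃ P₁ P₂, G.IsAltPath u v P₁ ∧ G.IsAltPath u v P₂ ∧
    firstColour P₁ ≠ firstColour P₂ ∧ lastColour P₁ ≠ lastColour P₂

/-- Trail-colour-connectivity: same as colour-connectivity but with trails. -/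
def TrailColourConnected (G : TwoEC V) : Prop :=
  ∀ u v : V, u ≠ v → ∃ T₁ T₂, G.IsAltTrail u v T₁ ∧ G.IsAltTrail u v T₂ ∧
    firstColour T₁ ≠ firstColour T₂ ∧ lastColour T₁ ≠ lastColour T₂

/-- The induced 2-edge-coloured subgraph on a set of vertices. -/
def induce (G : TwoEC V) (S : Set V) : TwoEC S where
  adj c u v := G.adj c u v
  symm := fun c u v h => G.symm c u v h
  loopless := fun c v => G.loopless c v

/-- An eulerian factor: a partition of the vertex set into classes each of which
induces a supereulerian subgraph. -/
def EulerianFactor (G : TwoEC V) : Prop :=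
  ∃ r : Setoid V, ∀ v : V, Supereulerian (G.induce {u | r.r u v})

/-- `H` is an extension of `G`: obtained by blowing up each vertex of `G` into a
nonempty independent set, preserving colours. -/
def IsExtension (G : TwoEC V) {W : Type} (H : TwoEC W) : Prop :=
  ∃ f : W → V, Function.Surjective f ∧ ∀ c x y, H.adj c x y ↔ G.adj c (f x) (f y)

/-- M-closed: endpoints of every monochromatic path of length two are adjacent. -/
def MClosed (G : TwoEC V) : Prop :=
  ∀ c x y z, G.adj c x y → G.adj c y z → x ≠ z → ∃ c', G.adj c' x z

/-- Complete multipartite 2-edge-coloured graph: two vertices are adjacent (in some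
colour) iff they lie in different parts. -/
def IsCompleteMultipartite (G : TwoEC V) : Prop :=
  ∃ p : V → V, ∀ u v, (∃ c, G.adj c u v) ↔ p u ≠ p v

/-- Complete bipartite 2-edge-coloured graph (with both parts nonempty). -/
def IsCompleteBipartite (G : TwoEC V) : Prop :=
  ∃ p : V → Bool, (∀ b, ∃ x, p x = b) ∧ ∀ u v, (∃ c, G.adj c u v) ↔ p u ≠ p v

/-- A 2-edge-coloured complete graph: each pair of distinct vertices is joined by
exactly one edge, which has exactly one colour. -/
def IsComplete (G : TwoEC V) : Prop :=
  ∀ u v : V, u ≠ v →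
    ((G.adj false u v ∨ G.adj true u v) ∧ ¬ (G.adj false u v ∧ G.adj true u v))

/-- An alternating cycle factor: vertex-disjoint alternating cycles covering `V`. -/
def AltCycleFactor (G : TwoEC V) : Prop :=
  ∃ Ls : Set (List (Step V)), (∀ L ∈ Ls, G.IsAltCycle L) ∧
    (∀ v : V, ∃ L ∈ Ls, visits L v) ∧
    (∀ L₁ ∈ Ls, ∀ L₂ ∈ Ls, L₁ ≠ L₂ → ∀ v : V, ¬ (visits L₁ v ∧ visits L₂ v))

/-- An alternating hamiltonian cycle. -/
def IsAltHamCycle (G : TwoEC V) (L : List (Step V)) : Prop :=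
  G.IsAltCycle L ∧ ∀ v : V, visits L v

/-- Connectivity of the underlying (uncoloured) graph. -/
def Connected (G : TwoEC V) : Prop :=
  ∀ u v : V, Relation.ReflTransGen (fun a b => ∃ c, G.adj c a b) u v

end TwoEC

open TwoEC in
/-- Eulerian: some closed alternating trail (possibly empty) uses every edge. -/
def TwoEC.Eulerian {V : Type} (G : TwoEC V) : Prop :=
  ∃ L : List (Step V), (L = [] ∨ G.IsClosedAltTrail L) ∧
    ∀ c (u v : V), G.adj c u v → ((u, c, v) ∈ L ∨ (v, c, u) ∈ L)


namespace EBAux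

open TwoEC List

variable {V : Type}

/-- the chain relation of alternating walks -/
def SRel (s t : Step V) : Prop := stepTgt s = stepSrc t ∧ stepCol s ≠ stepCol t

open scoped Classical in
noncomputable def inC (L : List (Step V)) (x : V) (d : Bool) : ℕ :=
  L.countP (fun s => decide (stepTgt s = x ∧ stepCol s = d))

open scoped Classical in
noncomputable def outC (L : List (Step V)) (x : V) (d : Bool) : ℕ :=
  L.countP (fun s => decide (stepSrc s = x ∧ stepCol s = d))

open scoped Classical in
noncomputable def tc (L : List (Step V)) (x : V) (d : Bool) : ℕ :=
  L.countP (fun s => decide (stepCol s = d ∧ (stepSrc s = x ∨ stepTgt s = x)))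

theorem countP_eq_of_forall₂ {α β : Type*} {R : α → β → Prop} {p : α → Bool} {q : β → Bool}
    {l1 : List α} {l2 : List β} (h : List.Forall₂ R l1 l2)
    (hpq : ∀ a b, R a b → (p a = q b)) : l1.countP p = l2.countP q := by
  induction h with
  | nil => rfl
  | cons hr _ ih => simp [List.countP_cons, ih, hpq _ _ hr]

theorem chain'_forall₂ {α : Type*} {r : α → α → Prop} :
    ∀ {L : List α}, L.Chain' r → List.Forall₂ r L.dropLast L.tail
  | [], _ => by simp
  | [a], _ => by simp
  | a :: b :: l, h => by
    unfold List.Chain' at h; rw [List.isChain_cons_cons] at h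
    simpa using List.Forall₂.cons h.1 (chain'_forall₂ h.2)

theorem forall₂_rotate {α : Type*} {r : α → α → Prop} {a : α} {t : List α}
    (h : (a :: t).Chain' r) (hw : r ((a :: t).getLast (by simp)) a) :
    List.Forall₂ r (a :: t) ((a :: t).rotate 1) := by
  have h1 : (a :: t).rotate 1 = t ++ [a] := by
    simpa using List.rotate_cons_succ t a 0
  have h2 : (a :: t) = (a :: t).dropLast ++ [(a :: t).getLast (by simp)] := by
    simp [List.dropLast_append_getLast]
  rw [h1]
  nth_rewrite 1 [h2]
  have htail : (a :: t).tail = t := rfl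
  exact List.rel_append (htail ▸ chain'_forall₂ h) (List.forall₂_cons.2 ⟨hw, List.Forall₂.nil⟩)

open scoped Classical in
theorem srel_pq {x : V} {d : Bool} {s s' : Step V} (h : SRel s s') :
    (decide (stepTgt s = x ∧ stepCol s = d)) = (decide (stepSrc s' = x ∧ stepCol s' = !d)) := by
  obtain ⟨h1, h2⟩ := h
  apply decide_eq_decide.2
  have : stepCol s' = !stepCol s := by
    cases hc : stepCol s <;> cases hc' : stepCol s' <;> simp_all
  rw [h1, this]
  constructor
  · rintro ⟨ha, hb⟩; exact ⟨ha, by rw [hb]⟩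
  · rintro ⟨ha, hb⟩; exact ⟨ha, by cases d <;> cases hcs : stepCol s <;> simp_all⟩

open scoped Classical in
theorem inC_outC_open {a : Step V} {t : List (Step V)} (h : (a :: t).Chain' SRel)
    (x : V) (d : Bool) :
    inC (a :: t) x d + (if stepSrc a = x ∧ stepCol a = !d then 1 else 0) =
      outC (a :: t) x (!d) +
        (if stepTgt ((a :: t).getLast (by simp)) = x ∧
            stepCol ((a :: t).getLast (by simp)) = d then 1 else 0) := by
  set L := a :: t with hL
  have hmid : L.dropLast.countP (fun s => decide (stepTgt s = x ∧ stepCol s = d)) =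
      L.tail.countP (fun s => decide (stepSrc s = x ∧ stepCol s = !d)) :=
    countP_eq_of_forall₂ (chain'_forall₂ h) (fun _ _ hr => srel_pq hr)
  have hsplit : L = L.dropLast ++ [L.getLast (by simp [hL])] := by
    simp [List.dropLast_append_getLast]
  have h1 : inC L x d = L.dropLast.countP (fun s => decide (stepTgt s = x ∧ stepCol s = d)) +
      (if stepTgt (L.getLast (by simp [hL])) = x ∧ stepCol (L.getLast (by simp [hL])) = d
        then 1 else 0) := by
    unfold inC
    nth_rewrite 1 [hsplit]
    rw [List.countP_append]
    simp [List.countP_singleton]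
  have h2 : outC L x (!d) =
      (if stepSrc a = x ∧ stepCol a = !d then 1 else 0) +
        L.tail.countP (fun s => decide (stepSrc s = x ∧ stepCol s = !d)) := by
    unfold outC
    rw [hL, List.countP_cons]
    simp [Nat.add_comm]
  rw [h1, h2, hmid]
  ring

open scoped Classical in
theorem inC_outC_closed {a : Step V} {t : List (Step V)} (h : (a :: t).Chain' SRel)
    (hw : SRel ((a :: t).getLast (by simp)) a) (x : V) (d : Bool) :
    inC (a :: t) x d = outC (a :: t) x (!d) := by
  have := countP_eq_of_forall₂ (p := fun s => decide (stepTgt s = x ∧ stepCol s = d))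
    (q := fun s => decide (stepSrc s = x ∧ stepCol s = !d))
    (forall₂_rotate h hw) (fun _ _ hr => srel_pq hr)
  unfold inC outC
  rw [this, (List.rotate_perm (a :: t) 1).countP_eq]

open scoped Classical in
theorem tc_eq_inC_add_outC {L : List (Step V)} (hlo : ∀ s ∈ L, stepSrc s ≠ stepTgt s)
    (x : V) (d : Bool) : tc L x d = inC L x d + outC L x d := by
  induction L with
  | nil => rfl
  | cons a t ih =>
    have hne := hlo a (by simp)
    have ih' := ih (fun s hs => hlo s (by simp [hs]))
    unfold tc inC outC at *
    rw [List.countP_cons, List.countP_cons, List.countP_cons]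
    by_cases hc : stepCol a = d <;> by_cases h1 : stepSrc a = x <;>
      by_cases h2 : stepTgt a = x <;> simp_all <;> omega

open scoped Classical in
theorem tc_closed_balance {a : Step V} {t : List (Step V)} (h : (a :: t).Chain' SRel)
    (hw : SRel ((a :: t).getLast (by simp)) a)
    (hlo : ∀ s ∈ a :: t, stepSrc s ≠ stepTgt s) (x : V) (d : Bool) :
    tc (a :: t) x d = tc (a :: t) x (!d) := by
  rw [tc_eq_inC_add_outC hlo, tc_eq_inC_add_outC hlo,
    inC_outC_closed h hw x d, inC_outC_closed h hw x (!d)]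
  simp [Nat.add_comm]

open scoped Classical in
theorem tc_open_lt {a : Step V} {t : List (Step V)} (h : (a :: t).Chain' SRel)
    (hlo : ∀ s ∈ a :: t, stepSrc s ≠ stepTgt s) {w : V} {c : Bool}
    (hwv : stepTgt ((a :: t).getLast (by simp)) = w)
    (hcv : stepCol ((a :: t).getLast (by simp)) = c)
    (hnc : ¬(stepSrc a = w ∧ stepCol a = !c)) :
    tc (a :: t) w (!c) < tc (a :: t) w c := by
  have e1 := inC_outC_open h w c
  have e2 := inC_outC_open h w (!c)
  rw [tc_eq_inC_add_outC hlo, tc_eq_inC_add_outC hlo]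
  have hc1 : (if stepTgt ((a :: t).getLast (by simp)) = w ∧
      stepCol ((a :: t).getLast (by simp)) = c then 1 else 0) = 1 := by
    simp [hwv, hcv]
  have hc2 : (if stepTgt ((a :: t).getLast (by simp)) = w ∧
      stepCol ((a :: t).getLast (by simp)) = !c then 1 else 0) = 0 := by
    simp [hwv, hcv]
  have hA : (if stepSrc a = w ∧ stepCol a = !c then 1 else 0) = 0 := by simp [hnc]
  rw [hc1, hA] at e1
  rw [hc2, Bool.not_not] at e2
  omega

open scoped Classical in
noncomputable def oth (x : V) (s : Step V) : V :=
  if stepSrc s = x then stepTgt s else stepSrc s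

open scoped Classical in
noncomputable def atL (L : List (Step V)) (x : V) (d : Bool) : List V :=
  (L.filter (fun s => decide (stepCol s = d ∧ (stepSrc s = x ∨ stepTgt s = x)))).map (oth x)

open scoped Classical in
theorem tc_eq_length_atL (L : List (Step V)) (x : V) (d : Bool) :
    tc L x d = (atL L x d).length := by
  unfold tc atL
  rw [List.length_map, List.countP_eq_length_filter]

theorem edge_eq_of_at {x : V} {d : Bool} {s : Step V} (hc : stepCol s = d)
    (hx : stepSrc s = x ∨ stepTgt s = x) (hne : stepSrc s ≠ stepTgt s) :
    stepEdge s = (d, Sym2.mk x (oth x s)) := by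
  unfold stepEdge oth
  by_cases h1 : stepSrc s = x
  · simp only [if_pos h1]
    rw [show s.2.1 = d from hc, show s.1 = x from h1]; rfl
  · simp only [if_neg h1]
    rcases hx with h | h
    · exact absurd h h1
    · rw [show s.2.1 = d from hc, show s.2.2 = x from h, Sym2.eq_swap]; rfl

open scoped Classical in
theorem mem_atL {L : List (Step V)} (hlo : ∀ s ∈ L, stepSrc s ≠ stepTgt s) {x u : V} {d : Bool} :
    u ∈ atL L x d ↔ (d, Sym2.mk x u) ∈ L.map stepEdge := by
  constructor
  · intro hu
    obtain ⟨s, hs, rfl⟩ := List.mem_map.1 hu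
    have hs' := List.mem_filter.1 hs
    have hp := of_decide_eq_true hs'.2
    exact List.mem_map.2 ⟨s, hs'.1, edge_eq_of_at hp.1 hp.2 (hlo s hs'.1)⟩
  · intro hu
    obtain ⟨s, hs, he⟩ := List.mem_map.1 hu
    have hc : stepCol s = d := congrArg Prod.fst he
    have h2 : Sym2.mk (stepSrc s) (stepTgt s) = Sym2.mk x u := congrArg Prod.snd he
    rw [Sym2.eq_iff] at h2
    have hne := hlo s hs
    rcases h2 with ⟨hsx, htu⟩ | ⟨hsu, htx⟩
    · refine List.mem_map.2 ⟨s, List.mem_filter.2 ⟨hs, decide_eq_true ⟨hc, Or.inl hsx⟩⟩, ?_⟩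
      simp [oth, hsx, htu]
    · refine List.mem_map.2 ⟨s, List.mem_filter.2 ⟨hs, decide_eq_true ⟨hc, Or.inr htx⟩⟩, ?_⟩
      have h1 : stepSrc s ≠ x := fun h => hne (h.trans htx.symm)
      simp [oth, h1, hsu]
      intro h; rw [htx, h]

open scoped Classical in
theorem nodup_atL {L : List (Step V)} (hlo : ∀ s ∈ L, stepSrc s ≠ stepTgt s)
    (hnd : (L.map stepEdge).Nodup) (x : V) (d : Bool) : (atL L x d).Nodup := by
  set p : Step V → Bool := fun s => decide (stepCol s = d ∧ (stepSrc s = x ∨ stepTgt s = x))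
  have hsub : ((L.filter p).map stepEdge).Sublist (L.map stepEdge) :=
    (List.filter_sublist (l := L)).map stepEdge
  have hnd' : ((L.filter p).map stepEdge).Nodup := hsub.nodup hnd
  have hcong : (L.filter p).map stepEdge =
      ((L.filter p).map (oth x)).map (fun u => (d, Sym2.mk x u)) := by
    rw [List.map_map]
    apply List.map_congr_left
    intro s hs
    have hs' := List.mem_filter.1 hs
    have hp := of_decide_eq_true hs'.2
    exact edge_eq_of_at hp.1 hp.2 (hlo s hs'.1)
  rw [hcong] at hnd'
  exact hnd'.of_map _

section Graph

variable [Fintype V] (G : TwoEC V)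

open scoped Classical in
noncomputable def nbr (d : Bool) (x : V) : Finset V :=
  Finset.univ.filter (fun u => G.adj d x u)

def Balanced : Prop := ∀ (x : V) (d : Bool), (nbr G d x).card = (nbr G (!d) x).card

variable {G}

open scoped Classical in
theorem mem_nbr {d : Bool} {x u : V} : u ∈ nbr G d x ↔ G.adj d x u := by
  simp [nbr]

theorem steps_loopless {L : List (Step V)}
    (hadj : ∀ s ∈ L, G.adj (stepCol s) (stepSrc s) (stepTgt s)) :
    ∀ s ∈ L, stepSrc s ≠ stepTgt s := by
  intro s hs h
  exact G.loopless _ _ (h ▸ hadj s hs)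

open scoped Classical in
theorem atL_subset_nbr {L : List (Step V)}
    (hadj : ∀ s ∈ L, G.adj (stepCol s) (stepSrc s) (stepTgt s)) (x : V) (d : Bool) :
    ∀ u ∈ atL L x d, u ∈ nbr G d x := by
  intro u hu
  obtain ⟨s, hs, rfl⟩ := List.mem_map.1 hu
  have hs' := List.mem_filter.1 hs
  have hp := of_decide_eq_true hs'.2
  have ha := hadj s hs'.1
  rw [mem_nbr]
  unfold oth
  by_cases h1 : stepSrc s = x
  · rw [if_pos h1]; rw [hp.1, h1] at ha; exact ha
  · rw [if_neg h1]
    rcases hp.2 with h | h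
    · exact absurd h h1
    · rw [hp.1, h] at ha; exact G.symm _ _ _ ha

open scoped Classical in
theorem tc_le_card_nbr {L : List (Step V)}
    (hadj : ∀ s ∈ L, G.adj (stepCol s) (stepSrc s) (stepTgt s))
    (hnd : (L.map stepEdge).Nodup) (x : V) (d : Bool) :
    tc L x d ≤ (nbr G d x).card := by
  rw [tc_eq_length_atL]
  have hlo := steps_loopless hadj
  have hnodup := nodup_atL hlo hnd x d
  rw [← List.toFinset_card_of_nodup hnodup]
  apply Finset.card_le_card
  intro u hu
  exact atL_subset_nbr hadj x d u (List.mem_toFinset.1 hu)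

open scoped Classical in
theorem exists_unused {L : List (Step V)}
    (hadj : ∀ s ∈ L, G.adj (stepCol s) (stepSrc s) (stepTgt s))
    (hnd : (L.map stepEdge).Nodup) {x : V} {d : Bool}
    (hlt : tc L x d < (nbr G d x).card) :
    ∃ u, G.adj d x u ∧ (d, Sym2.mk x u) ∉ L.map stepEdge := by
  have hlo := steps_loopless hadj
  have hnodup := nodup_atL hlo hnd x d
  rw [tc_eq_length_atL, ← List.toFinset_card_of_nodup hnodup] at hlt
  have hss : (atL L x d).toFinset ⊆ nbr G d x := by
    intro u hu; exact atL_subset_nbr hadj x d u (List.mem_toFinset.1 hu)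
  have hns : ¬ (nbr G d x ⊆ (atL L x d).toFinset) :=
    fun h => absurd (Finset.card_le_card h) (by omega)
  obtain ⟨u, hu1, hu2⟩ := Finset.not_subset.1 hns
  exact ⟨u, mem_nbr.1 hu1, fun hc => hu2 (List.mem_toFinset.2 ((mem_atL hlo).2 hc))⟩

end Graph

section Trails

variable {G : TwoEC V}

theorem isAltWalk_cons {u v : V} {a : Step V} {t : List (Step V)} :
    G.IsAltWalk u v (a :: t) ↔
      stepSrc a = u ∧ stepTgt ((a :: t).getLast (by simp)) = v ∧
      (∀ s ∈ a :: t, G.adj (stepCol s) (stepSrc s) (stepTgt s)) ∧ (a :: t).Chain' SRel := by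
  unfold TwoEC.IsAltWalk
  rw [List.getLast?_eq_getLast_of_ne_nil (l := a :: t) (by simp)]
  constructor
  · rintro ⟨-, h1, h2, h3, h4⟩
    refine ⟨by simpa using h1, by simpa using h2, h3, h4⟩
  · rintro ⟨h1, h2, h3, h4⟩
    exact ⟨by simp, by simpa using h1, by simpa using h2, h3, h4⟩

theorem lastColour_cons {a : Step V} {t : List (Step V)} :
    lastColour (a :: t) = some (stepCol ((a :: t).getLast (by simp))) := by
  unfold lastColour
  rw [List.getLast?_eq_getLast_of_ne_nil (l := a :: t) (by simp)]
  rfl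

theorem firstColour_cons {a : Step V} {t : List (Step V)} :
    firstColour (a :: t) = some (stepCol a) := rfl

/-- extend an open alternating trail by one unused edge of the opposite colour -/
theorem trail_extend {v0 w u : V} {a : Step V} {t : List (Step V)}
    (hT : G.IsAltTrail v0 w (a :: t))
    (hadj : G.adj (!(stepCol ((a :: t).getLast (by simp)))) w u)
    (hun : ((!(stepCol ((a :: t).getLast (by simp)))), Sym2.mk w u) ∉
      (a :: t).map stepEdge) :
    G.IsAltTrail v0 u ((a :: t) ++ [(w, !(stepCol ((a :: t).getLast (by simp))), u)]) := by
  obtain ⟨hW, hnd⟩ := hT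
  rw [isAltWalk_cons] at hW
  obtain ⟨hsrc, htgt, hadjL, hch⟩ := hW
  set lst := (a :: t).getLast (by simp) with hlst
  set s' : Step V := (w, !(stepCol lst), u) with hs'
  constructor
  · refine ⟨by simp, ?_, ?_, ?_, ?_⟩
    · rw [List.cons_append]
      simpa using hsrc
    · rw [List.getLast?_concat]
      rfl
    · intro s hs
      rcases List.mem_append.1 hs with h | h
      · exact hadjL s h
      · rw [List.mem_singleton.1 h]
        exact hadj
    · unfold List.Chain'; rw [List.isChain_append]
      refine ⟨hch, List.isChain_singleton _, ?_⟩
      intro x hx y hy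
      have hx' : lst = x := by
        rw [List.getLast?_eq_getLast_of_ne_nil (l := a :: t) (by simp)] at hx
        simpa [Option.mem_def] using hx
      have hy' : s' = y := by simpa using hy
      subst hx'; subst hy'
      refine ⟨htgt, ?_⟩
      show stepCol lst ≠ !(stepCol lst)
      cases stepCol lst <;> simp
  · rw [List.map_append]
    simp only [List.map_cons, List.map_nil]
    rw [List.nodup_append]
    refine ⟨hnd, List.nodup_singleton _, ?_⟩
    intro e he e' he' hee
    rw [hee, List.mem_singleton.1 he'] at he
    exact hun he

end Trails

section Extract

variable [Fintype V] {G : TwoEC V}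

/-- either the current trail closes up, or it can be extended -/
theorem close_or_extend (hbal : Balanced G) {v0 w : V} {a : Step V} {t : List (Step V)}
    (hT : G.IsAltTrail v0 w (a :: t)) :
    G.IsClosedAltTrail (a :: t) ∨
      ∃ s' : Step V, G.IsAltTrail v0 (stepTgt s') ((a :: t) ++ [s']) := by
  obtain ⟨hW, hnd⟩ := hT
  have hW' := isAltWalk_cons.1 hW
  obtain ⟨hsrc, htgt, hadjL, hch⟩ := hW'
  set lst := (a :: t).getLast (by simp) with hlst
  set c := stepCol lst with hc
  by_cases hcl : w = v0 ∧ stepCol lst ≠ stepCol a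
  · left
    refine ⟨v0, ⟨?_, hnd⟩, ?_⟩
    · exact hcl.1 ▸ hW
    · rw [lastColour_cons, firstColour_cons]
      simpa using hcl.2
  · right
    have hnc : ¬(stepSrc a = w ∧ stepCol a = !c) := by
      rintro ⟨h1, h2⟩
      exact hcl ⟨(h1.symm.trans hsrc), by rw [h2, ← hc]; cases c <;> simp⟩
    have hlt : tc (a :: t) w (!c) < tc (a :: t) w c :=
      tc_open_lt hch (steps_loopless hadjL) htgt rfl hnc
    have hle : tc (a :: t) w c ≤ (nbr G c w).card := tc_le_card_nbr hadjL hnd w c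
    have hbal' := hbal w c
    have hlt2 : tc (a :: t) w (!c) < (nbr G (!c) w).card := by omega
    obtain ⟨u, hu1, hu2⟩ := exists_unused hadjL hnd hlt2
    exact ⟨(w, !c, u), trail_extend ⟨hW, hnd⟩ hu1 hu2⟩

open scoped Classical in
theorem extract_closed (hbal : Balanced G) :
    ∀ (k : ℕ) (v0 w : V) (a : Step V) (t : List (Step V)),
      G.IsAltTrail v0 w (a :: t) →
      Fintype.card (Bool × Sym2 V) ≤ (a :: t).length + k →
      ∃ L, G.IsClosedAltTrail L ∧ v0 ∈ L.map stepSrc := by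
  intro k
  induction k with
  | zero =>
    intro v0 w a t hT hlen
    rcases close_or_extend hbal hT with h | ⟨s', hT'⟩
    · refine ⟨a :: t, h, List.mem_map.2 ⟨a, by simp, ?_⟩⟩
      have := hT.1.2.1
      simpa using this
    · exfalso
      have hnd' := hT'.2
      have hlc : ((a :: t) ++ [s']).length ≤ Fintype.card (Bool × Sym2 V) := by
        rw [← List.length_map stepEdge]
        exact hnd'.length_le_card
      have hl2 : ((a :: t) ++ [s']).length = (a :: t).length + 1 := by simp
      omega
  | succ k ih =>
    intro v0 w a t hT hlen
    rcases close_or_extend hbal hT with h | ⟨s', hT'⟩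
    · refine ⟨a :: t, h, List.mem_map.2 ⟨a, by simp, ?_⟩⟩
      have := hT.1.2.1
      simpa using this
    · have : (a :: t) ++ [s'] = a :: (t ++ [s']) := by simp
      rw [this] at hT'
      refine ih v0 (stepTgt s') a (t ++ [s']) hT' ?_
      simp at hlen ⊢
      omega

theorem extract_from_edge (hbal : Balanced G) {c : Bool} {v0 u : V} (h : G.adj c v0 u) :
    ∃ L, G.IsClosedAltTrail L ∧ v0 ∈ L.map stepSrc := by
  classical
  refine extract_closed hbal (Fintype.card (Bool × Sym2 V)) v0 u (v0, c, u) [] ⟨?_, by simp⟩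
    (by simp)
  rw [isAltWalk_cons]
  exact ⟨rfl, rfl, by simpa [stepCol, stepSrc, stepTgt] using h, List.isChain_singleton _⟩

end Extract

section Closed

variable {G : TwoEC V}

/-- list-level characterisation of nonempty closed alternating trails -/
def CTL (G : TwoEC V) (L : List (Step V)) : Prop :=
  L ≠ [] ∧ (∀ s ∈ L, G.adj (stepCol s) (stepSrc s) (stepTgt s)) ∧ L.Chain' SRel ∧
    (L.map stepEdge).Nodup ∧
    ∀ x ∈ L.getLast?, ∀ y ∈ L.head?, SRel x y

theorem CTL_iff {L : List (Step V)} : G.IsClosedAltTrail L ↔ CTL G L := by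
  constructor
  · rintro ⟨u, ⟨⟨hne, hh, hl, hadj, hch⟩, hnd⟩, hcol⟩
    refine ⟨hne, hadj, hch, hnd, ?_⟩
    intro x hx y hy
    rw [List.getLast?_eq_getLast_of_ne_nil hne, Option.mem_def, Option.some_inj] at hx
    obtain ⟨a, t, rfl⟩ := List.exists_cons_of_ne_nil hne
    have hy' : a = y := by simpa [Option.mem_def] using hy
    subst hy'
    constructor
    · rw [← hx]
      have h1 : stepTgt ((a :: t).getLast (by simp)) = u := by
        rw [List.getLast?_eq_getLast_of_ne_nil (l := a :: t) (by simp)] at hl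
        simpa using hl
      have h2 : stepSrc a = u := by simpa using hh
      rw [h1, h2]
    · rw [← hx]
      intro hc
      apply hcol
      rw [lastColour_cons, firstColour_cons, hc]
  · rintro ⟨hne, hadj, hch, hnd, hwrap⟩
    obtain ⟨a, t, rfl⟩ := List.exists_cons_of_ne_nil hne
    have hw := hwrap ((a :: t).getLast (by simp))
      (by rw [List.getLast?_eq_getLast_of_ne_nil]; rfl) a rfl
    refine ⟨stepSrc a, ⟨isAltWalk_cons.2 ⟨rfl, hw.1, hadj, hch⟩, hnd⟩, ?_⟩
    rw [lastColour_cons, firstColour_cons]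
    simpa using hw.2

theorem CTL.rotate {P Q : List (Step V)} (h : CTL G (P ++ Q)) (hQ : Q ≠ []) :
    CTL G (Q ++ P) := by
  obtain ⟨hne, hadj, hch, hnd, hwrap⟩ := h
  by_cases hP : P = []
  · subst hP
    simp only [List.nil_append] at hne hadj hch hnd hwrap
    rw [List.append_nil]
    exact ⟨hne, hadj, hch, hnd, hwrap⟩
  have hch' := List.isChain_append.1 hch
  refine ⟨by simp [hQ], ?_, ?_, ?_, ?_⟩
  · intro s hs; exact hadj s (by rw [List.mem_append] at hs ⊢; tauto)
  · unfold List.Chain'; rw [List.isChain_append]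
    refine ⟨hch'.2.1, hch'.1, ?_⟩
    intro x hx y hy
    apply hwrap
    · rw [List.getLast?_append_of_ne_nil _ hQ]; exact hx
    · rw [List.head?_append_of_ne_nil _ hP]; exact hy
  · rw [List.map_append]
    rw [List.map_append] at hnd
    exact List.perm_append_comm.nodup hnd
  · intro x hx y hy
    apply hch'.2.2
    · rw [List.getLast?_append_of_ne_nil _ hP] at hx; exact hx
    · rw [List.head?_append_of_ne_nil _ hQ] at hy; exact hy

end Closed

section Rev

variable {G : TwoEC V}

def flipStep (s : Step V) : Step V := (stepTgt s, stepCol s, stepSrc s)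

theorem stepEdge_flip (s : Step V) : stepEdge (flipStep s) = stepEdge s := by
  unfold stepEdge flipStep stepTgt stepCol stepSrc
  simp [Sym2.eq_swap]

def revL (L : List (Step V)) : List (Step V) := (L.map flipStep).reverse

theorem revL_edges (L : List (Step V)) :
    (revL L).map stepEdge = (L.map stepEdge).reverse := by
  rw [revL, List.map_reverse, List.map_map]
  congr 1
  exact List.map_congr_left fun s _ => stepEdge_flip s

theorem revL_eq_cons {a : Step V} {t : List (Step V)} :
    revL (a :: t) =
      flipStep ((a :: t).getLast (by simp)) :: ((a :: t).dropLast.map flipStep).reverse := by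
  conv_lhs => rw [revL, ← List.dropLast_append_getLast (l := a :: t) (by simp)]
  rw [List.map_append, List.reverse_append]
  simp

theorem revL_getLast? {a : Step V} {t : List (Step V)} :
    (revL (a :: t)).getLast? = some (flipStep a) := by
  rw [revL]
  simp only [List.map_cons]
  rw [List.reverse_cons, List.getLast?_concat]

theorem CTL.rev {a : Step V} {t : List (Step V)} (h : CTL G (a :: t)) :
    CTL G (revL (a :: t)) := by
  obtain ⟨hne, hadj, hch, hnd, hwrap⟩ := h
  have hwrap' := hwrap ((a :: t).getLast (by simp))
    (by rw [List.getLast?_eq_getLast_of_ne_nil]; rfl) a rfl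
  refine ⟨by rw [revL_eq_cons]; simp, ?_, ?_, ?_, ?_⟩
  · intro s hs
    rw [revL, List.mem_reverse] at hs
    obtain ⟨s', hs', rfl⟩ := List.mem_map.1 hs
    exact G.symm _ _ _ (hadj s' hs')
  · unfold List.Chain'; rw [revL, List.isChain_reverse, List.isChain_map]
    apply hch.imp
    intro s s' hss'
    exact ⟨hss'.1.symm, hss'.2.symm⟩
  · rw [revL_edges]
    exact (List.nodup_reverse).2 hnd
  · intro x hx y hy
    rw [revL_getLast?, Option.mem_def, Option.some_inj] at hx
    rw [revL_eq_cons, List.head?_cons, Option.mem_def, Option.some_inj] at hy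
    subst hx; subst hy
    exact ⟨hwrap'.1.symm, fun hc => hwrap'.2 hc.symm⟩

end Rev

section Splice

variable {G : TwoEC V}

theorem CTL.splice {a1 a2 : Step V} {t1 t2 : List (Step V)}
    (h1 : CTL G (a1 :: t1)) (h2 : CTL G (a2 :: t2))
    (hv : stepSrc a1 = stepSrc a2)
    (hc1 : stepCol ((a1 :: t1).getLast (by simp)) ≠ stepCol a2)
    (hc2 : stepCol ((a2 :: t2).getLast (by simp)) ≠ stepCol a1)
    (hdisj : ∀ e ∈ (a1 :: t1).map stepEdge, e ∉ (a2 :: t2).map stepEdge) :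
    CTL G ((a1 :: t1) ++ (a2 :: t2)) := by
  obtain ⟨-, hadj1, hch1, hnd1, hwrap1⟩ := h1
  obtain ⟨-, hadj2, hch2, hnd2, hwrap2⟩ := h2
  have hw1 := hwrap1 ((a1 :: t1).getLast (by simp))
    (by rw [List.getLast?_eq_getLast_of_ne_nil]; rfl) a1 rfl
  have hw2 := hwrap2 ((a2 :: t2).getLast (by simp))
    (by rw [List.getLast?_eq_getLast_of_ne_nil]; rfl) a2 rfl
  refine ⟨by simp, ?_, ?_, ?_, ?_⟩
  · intro s hs
    rcases List.mem_append.1 hs with h | h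
    · exact hadj1 s h
    · exact hadj2 s h
  · unfold List.Chain'; rw [List.isChain_append]
    refine ⟨hch1, hch2, ?_⟩
    intro x hx y hy
    rw [List.getLast?_eq_getLast_of_ne_nil (by simp), Option.mem_def, Option.some_inj] at hx
    rw [List.head?_cons, Option.mem_def, Option.some_inj] at hy
    subst hx; subst hy
    exact ⟨hw1.1.trans hv, hc1⟩
  · rw [List.map_append, List.nodup_append]
    exact ⟨hnd1, hnd2, fun e he e' he' hee => hdisj e he (hee ▸ he')⟩
  · intro x hx y hy
    rw [List.getLast?_append_of_ne_nil _ (by simp : (a2 :: t2) ≠ []),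
      List.getLast?_eq_getLast_of_ne_nil (by simp), Option.mem_def, Option.some_inj] at hx
    rw [List.head?_append_of_ne_nil _ (by simp : (a1 :: t1) ≠ []),
      List.head?_cons, Option.mem_def, Option.some_inj] at hy
    subst hx; subst hy
    exact ⟨hw2.1.trans hv.symm, hc2⟩

/-- merge two edge-disjoint closed alternating trails based at the same vertex -/
theorem CTL.merge {a1 a2 : Step V} {t1 t2 : List (Step V)}
    (h1 : CTL G (a1 :: t1)) (h2 : CTL G (a2 :: t2))
    (hv : stepSrc a1 = stepSrc a2)
    (hdisj : ∀ e ∈ (a1 :: t1).map stepEdge, e ∉ (a2 :: t2).map stepEdge) :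
    ∃ (b : Step V) (r : List (Step V)), CTL G (b :: r) ∧ stepSrc b = stepSrc a1 ∧
      ∀ e, e ∈ (b :: r).map stepEdge ↔
        (e ∈ (a1 :: t1).map stepEdge ∨ e ∈ (a2 :: t2).map stepEdge) := by
  have hw1 : stepCol ((a1 :: t1).getLast (by simp)) ≠ stepCol a1 :=
    (h1.2.2.2.2 _ (by rw [List.getLast?_eq_getLast_of_ne_nil]; rfl) a1 rfl).2
  have hw2 : stepCol ((a2 :: t2).getLast (by simp)) ≠ stepCol a2 :=
    (h2.2.2.2.2 _ (by rw [List.getLast?_eq_getLast_of_ne_nil]; rfl) a2 rfl).2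
  by_cases hcc : stepCol ((a1 :: t1).getLast (by simp)) = stepCol ((a2 :: t2).getLast (by simp))
  · -- direct splice
    have hc1 : stepCol ((a1 :: t1).getLast (by simp)) ≠ stepCol a2 := by
      rw [hcc]; exact hw2
    have hc2 : stepCol ((a2 :: t2).getLast (by simp)) ≠ stepCol a1 := by
      rw [← hcc]; exact hw1
    refine ⟨a1, t1 ++ a2 :: t2, ?_, rfl, ?_⟩
    · exact h1.splice h2 hv hc1 hc2 hdisj
    · intro e
      have hsplit : (a1 :: (t1 ++ a2 :: t2)).map stepEdge =
          (a1 :: t1).map stepEdge ++ (a2 :: t2).map stepEdge := by simp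
      rw [hsplit, List.mem_append]
  · -- reverse the second trail, then splice
    have h2' := h2.rev
    rw [revL_eq_cons] at h2'
    set b2 := flipStep ((a2 :: t2).getLast (by simp)) with hb2
    set r2 := ((a2 :: t2).dropLast.map flipStep).reverse with hr2
    have hv' : stepSrc a1 = stepSrc b2 := by
      have := (h2.2.2.2.2 _ (by rw [List.getLast?_eq_getLast_of_ne_nil (by simp)]; rfl) a2 rfl).1
      rw [hb2]
      show stepSrc a1 = stepTgt ((a2 :: t2).getLast (by simp))
      rw [this, hv]
    have hedges2 : (b2 :: r2).map stepEdge = ((a2 :: t2).map stepEdge).reverse := by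
      rw [← revL_edges, revL_eq_cons]
    have hlast2 : (b2 :: r2).getLast (by simp) = flipStep a2 := by
      have := revL_getLast? (a := a2) (t := t2)
      rw [revL_eq_cons, List.getLast?_eq_getLast_of_ne_nil (by simp), Option.some_inj] at this
      exact this
    have hc1 : stepCol ((a1 :: t1).getLast (by simp)) ≠ stepCol b2 := by
      show _ ≠ stepCol (flipStep _)
      intro hc
      exact hcc (by simpa [flipStep, stepCol] using hc)
    have hc2 : stepCol ((b2 :: r2).getLast (by simp)) ≠ stepCol a1 := by
      rw [hlast2]
      show stepCol a2 = stepCol a1 → False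
      intro hc
      -- colours: last1 ≠ out1 = out2 = !last2 and last1 ≠ last2 : contradiction
      apply hcc
      have e1 := hw1; have e2 := hw2
      rw [hc] at e2
      revert e1 e2
      cases h1c : stepCol ((a1 :: t1).getLast (by simp)) <;>
        cases h2c : stepCol ((a2 :: t2).getLast (by simp)) <;>
        cases hac : stepCol a1 <;> simp_all
    have hdisj' : ∀ e ∈ (a1 :: t1).map stepEdge, e ∉ (b2 :: r2).map stepEdge := by
      intro e he hc
      rw [hedges2, List.mem_reverse] at hc
      exact hdisj e he hc
    refine ⟨a1, t1 ++ b2 :: r2, ?_, rfl, ?_⟩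
    · exact h1.splice h2' hv' hc1 hc2 hdisj'
    · intro e
      have hsplit : (a1 :: (t1 ++ b2 :: r2)).map stepEdge =
          (a1 :: t1).map stepEdge ++ (b2 :: r2).map stepEdge := by simp
      rw [hsplit, List.mem_append, hedges2, List.mem_reverse]

end Splice

section Rotate

variable {G : TwoEC V}

theorem CTL.rotate_to {L : List (Step V)} (h : CTL G L) {s : Step V} (hs : s ∈ L) :
    ∃ r, CTL G (s :: r) ∧ ∀ e, e ∈ (s :: r).map stepEdge ↔ e ∈ L.map stepEdge := by
  obtain ⟨P, Q, rfl⟩ := List.append_of_mem hs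
  have h' := h.rotate (Q := s :: Q) (by simp)
  refine ⟨Q ++ P, by simpa using h', fun e => ?_⟩
  simp only [List.map_cons, List.map_append, List.mem_append, List.mem_cons]
  tauto

theorem CTL.visits_src {L : List (Step V)} (h : CTL G L) {v : V} (hv : visits L v) :
    ∃ s ∈ L, stepSrc s = v := by
  rcases hv with hv | hv
  · obtain ⟨s, hs, rfl⟩ := List.mem_map.1 hv
    exact ⟨s, hs, rfl⟩
  · obtain ⟨s, hs, rfl⟩ := List.mem_map.1 hv
    obtain ⟨hne, hadj, hch, hnd, hwrap⟩ := h
    obtain ⟨a, t, rfl⟩ := List.exists_cons_of_ne_nil hne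
    have hw := hwrap ((a :: t).getLast (by simp))
      (by rw [List.getLast?_eq_getLast_of_ne_nil (by simp)]; rfl) a rfl
    have hf := forall₂_rotate hch hw
    rw [List.forall₂_iff_get] at hf
    obtain ⟨hlen, hget⟩ := hf
    obtain ⟨i, hi, hig⟩ := List.getElem_of_mem hs
    have hrel := hget i hi (by omega)
    set s' := ((a :: t).rotate 1).get ⟨i, by omega⟩ with hs'
    have hmem : s' ∈ (a :: t).rotate 1 := List.get_mem _ ⟨i, by omega⟩
    have hmem' : s' ∈ (a :: t) := (List.rotate_perm (a :: t) 1).subset hmem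
    refine ⟨s', hmem', ?_⟩
    have : (a :: t).get ⟨i, hi⟩ = s := by simpa using hig
    rw [this] at hrel
    exact hrel.1.symm

end Rotate

section Del

variable [Fintype V]

/-- delete the edges of `L` from `G` -/
def delG (G : TwoEC V) (L : List (Step V)) : TwoEC V where
  adj c u v := G.adj c u v ∧ (c, Sym2.mk u v) ∉ L.map stepEdge
  symm c u v h := ⟨G.symm c u v h.1, by rw [Sym2.eq_swap]; exact h.2⟩
  loopless c v h := G.loopless c v h.1

open scoped Classical in
theorem nbr_delG {G : TwoEC V} {L : List (Step V)}
    (hadj : ∀ s ∈ L, G.adj (stepCol s) (stepSrc s) (stepTgt s)) (d : Bool) (x : V) :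
    nbr (delG G L) d x = nbr G d x \ (atL L x d).toFinset := by
  ext u
  rw [Finset.mem_sdiff, mem_nbr, mem_nbr, List.mem_toFinset,
    mem_atL (steps_loopless hadj)]
  exact ⟨fun h => ⟨h.1, h.2⟩, fun h => ⟨h.1, h.2⟩⟩

open scoped Classical in
theorem card_nbr_delG {G : TwoEC V} {L : List (Step V)}
    (hadj : ∀ s ∈ L, G.adj (stepCol s) (stepSrc s) (stepTgt s))
    (hnd : (L.map stepEdge).Nodup) (d : Bool) (x : V) :
    (nbr (delG G L) d x).card = (nbr G d x).card - tc L x d := by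
  rw [nbr_delG hadj, Finset.card_sdiff_of_subset]
  · rw [List.toFinset_card_of_nodup (nodup_atL (steps_loopless hadj) hnd x d),
      ← tc_eq_length_atL]
  · intro u hu
    exact atL_subset_nbr hadj x d u (List.mem_toFinset.1 hu)

open scoped Classical in
theorem balanced_delG {G : TwoEC V} (hbal : Balanced G) {a : Step V} {t : List (Step V)}
    (h : CTL G (a :: t)) : Balanced (delG G (a :: t)) := by
  intro x d
  obtain ⟨hne, hadj, hch, hnd, hwrap⟩ := h
  have hw := hwrap ((a :: t).getLast (by simp))
    (by rw [List.getLast?_eq_getLast_of_ne_nil (by simp)]; rfl) a rfl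
  rw [card_nbr_delG hadj hnd, card_nbr_delG hadj hnd,
    tc_closed_balance hch hw (steps_loopless hadj) x d, hbal x d]

theorem CTL_of_delG {G : TwoEC V} {L L2 : List (Step V)} (h : CTL (delG G L) L2) :
    CTL G L2 ∧ ∀ e ∈ L2.map stepEdge, e ∉ L.map stepEdge := by
  obtain ⟨hne, hadj, hch, hnd, hwrap⟩ := h
  refine ⟨⟨hne, fun s hs => (hadj s hs).1, hch, hnd, hwrap⟩, ?_⟩
  intro e he
  obtain ⟨s, hs, rfl⟩ := List.mem_map.1 he
  exact (hadj s hs).2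

end Del

section Grow

variable [Fintype V] {G : TwoEC V}

theorem touch (hconn : G.Connected) {L : List (Step V)} (hC : CTL G L) {c : Bool} {u v : V}
    (hadj : G.adj c u v) (hun : (c, Sym2.mk u v) ∉ L.map stepEdge) :
    ∃ (c' : Bool) (x y : V), G.adj c' x y ∧ (c', Sym2.mk x y) ∉ L.map stepEdge ∧
      ∃ s ∈ L, stepSrc s = x := by
  by_contra hno
  push_neg at hno
  have hW : ∀ z, Relation.ReflTransGen (fun a b => ∃ c, G.adj c a b) u z →
      ∀ s ∈ L, stepSrc s ≠ z := by
    intro z hz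
    induction hz with
    | refl => exact hno c u v hadj hun
    | tail h1 h2 ih =>
      rename_i mid ep
      obtain ⟨c', hc'⟩ := h2
      by_cases hused : (c', Sym2.mk mid ep) ∈ L.map stepEdge
      · exfalso
        obtain ⟨s, hs, he⟩ := List.mem_map.1 hused
        have h2' : Sym2.mk (stepSrc s) (stepTgt s) = Sym2.mk mid ep := congrArg Prod.snd he
        rw [Sym2.eq_iff] at h2'
        rcases h2' with ⟨hb, -⟩ | ⟨-, hb⟩
        · exact ih s hs hb
        · obtain ⟨s', hs', hb'⟩ := hC.visits_src (Or.inr (List.mem_map.2 ⟨s, hs, hb⟩))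
          exact ih s' hs' hb'
      · apply hno c' ep mid (G.symm _ _ _ hc')
        rw [Sym2.eq_swap]
        exact hused
  obtain ⟨a, t, hLat⟩ := List.exists_cons_of_ne_nil hC.1
  exact hW (stepSrc a) (hconn u (stepSrc a)) a (by rw [hLat]; simp) rfl

open scoped Classical in
noncomputable def uncov (G : TwoEC V) (L : List (Step V)) : Finset (Bool × Sym2 V) :=
  Finset.univ.filter
    (fun e => (∃ u v, G.adj e.1 u v ∧ e.2 = Sym2.mk u v) ∧ e ∉ L.map stepEdge)

open scoped Classical in
theorem mem_uncov {L : List (Step V)} {e : Bool × Sym2 V} :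
    e ∈ uncov G L ↔
      (∃ u v, G.adj e.1 u v ∧ e.2 = Sym2.mk u v) ∧ e ∉ L.map stepEdge := by
  simp [uncov]

open scoped Classical in
theorem progress (hconn : G.Connected) (hbal : Balanced G) {L : List (Step V)}
    (hL : L = [] ∨ CTL G L) {c : Bool} {u v : V} (hadj : G.adj c u v)
    (hun : (c, Sym2.mk u v) ∉ L.map stepEdge) :
    ∃ L'', CTL G L'' ∧ uncov G L'' ⊂ uncov G L := by
  rcases hL with rfl | hC
  · obtain ⟨L1, hL1, -⟩ := extract_from_edge hbal hadj
    have hC1 : CTL G L1 := CTL_iff.1 hL1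
    obtain ⟨a1, t1, rfl⟩ := List.exists_cons_of_ne_nil hC1.1
    refine ⟨a1 :: t1, hC1, ?_, ?_⟩
    · intro e he
      rw [mem_uncov] at he ⊢
      exact ⟨he.1, by simp⟩
    · intro hss
      have he1 : stepEdge a1 ∈ uncov G [] := by
        rw [mem_uncov]
        have := hC1.2.1 a1 (by simp)
        exact ⟨⟨stepSrc a1, stepTgt a1, this, rfl⟩, by simp⟩
      have := hss he1
      rw [mem_uncov] at this
      exact this.2 (by simp)
  · obtain ⟨c', x, y, hadj', hun', s0, hs0, hsrc0⟩ := touch hconn hC hadj hun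
    have hbal' : Balanced (delG G L) := by
      obtain ⟨a, t, rfl⟩ := List.exists_cons_of_ne_nil hC.1
      exact balanced_delG hbal hC
    obtain ⟨L2, hL2, hx2⟩ :=
      extract_from_edge (G := delG G L) hbal' (c := c') (v0 := x) (u := y) ⟨hadj', hun'⟩
    obtain ⟨hC2, hdisj2⟩ := CTL_of_delG (CTL_iff.1 hL2)
    obtain ⟨r1, hC1', hedge1⟩ := hC.rotate_to hs0
    obtain ⟨s2, hs2, hsrc2⟩ := List.mem_map.1 hx2
    obtain ⟨r2, hC2', hedge2⟩ := hC2.rotate_to hs2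
    have hdisj : ∀ e ∈ (s0 :: r1).map stepEdge, e ∉ (s2 :: r2).map stepEdge := by
      intro e he hc2
      exact hdisj2 e ((hedge2 e).1 hc2) ((hedge1 e).1 he)
    obtain ⟨b, r, hCm, -, hmem⟩ :=
      hC1'.merge hC2' (by rw [hsrc0, hsrc2]) hdisj
    refine ⟨b :: r, hCm, ?_, ?_⟩
    · intro e he
      rw [mem_uncov] at he ⊢
      refine ⟨he.1, fun hc2 => he.2 ((hmem e).2 (Or.inl ((hedge1 e).2 hc2)))⟩
    · intro hss
      have he2 : stepEdge s2 ∈ uncov G L := by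
        rw [mem_uncov]
        refine ⟨⟨stepSrc s2, stepTgt s2, hC2.2.1 s2 hs2, rfl⟩, ?_⟩
        exact hdisj2 (stepEdge s2) (List.mem_map.2 ⟨s2, hs2, rfl⟩)
      have := hss he2
      rw [mem_uncov] at this
      exact this.2 ((hmem _).2 (Or.inr ((hedge2 _).2 (List.mem_map.2 ⟨s2, hs2, rfl⟩))))
  
open scoped Classical in
theorem grow (hconn : G.Connected) (hbal : Balanced G) :
    ∀ (k : ℕ) (L : List (Step V)), (L = [] ∨ CTL G L) → (uncov G L).card ≤ k →
      ∃ L', (L' = [] ∨ CTL G L') ∧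
        ∀ (c : Bool) (u v : V), G.adj c u v → (c, Sym2.mk u v) ∈ L'.map stepEdge := by
  intro k
  induction k with
  | zero =>
    intro L hL hcard
    by_cases hdone : ∀ (c : Bool) (u v : V), G.adj c u v → (c, Sym2.mk u v) ∈ L.map stepEdge
    · exact ⟨L, hL, hdone⟩
    · exfalso
      push_neg at hdone
      obtain ⟨c, u, v, hadj, hun⟩ := hdone
      have : (c, Sym2.mk u v) ∈ uncov G L :=
        mem_uncov.2 ⟨⟨u, v, hadj, rfl⟩, hun⟩
      have := Finset.card_pos.2 ⟨_, this⟩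
      omega
  | succ k ih =>
    intro L hL hcard
    by_cases hdone : ∀ (c : Bool) (u v : V), G.adj c u v → (c, Sym2.mk u v) ∈ L.map stepEdge
    · exact ⟨L, hL, hdone⟩
    · push_neg at hdone
      obtain ⟨c, u, v, hadj, hun⟩ := hdone
      obtain ⟨L'', hC'', hss⟩ := progress hconn hbal hL hadj hun
      have hlt := Finset.card_lt_card hss
      exact ih L'' (Or.inr hC'') (by omega)

end Grow

section Final

variable [Fintype V] {G : TwoEC V}

open scoped Classical in
theorem natcard_nbr (G : TwoEC V) (d : Bool) (x : V) :
    Nat.card {u : V // G.adj d x u} = (nbr G d x).card := by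
  rw [Nat.card_eq_fintype_card]
  convert Fintype.card_subtype (fun u => G.adj d x u)
  ext u; simp [nbr]

end Final

end EBAux

open TwoEC in
theorem eulerian_iff_balanced {V : Type} [Fintype V] (G : TwoEC V)
    (hconn : G.Connected) :
    G.Eulerian ↔
      ∀ v : V, Nat.card {u : V // G.adj false v u} = Nat.card {u : V // G.adj true v u} := by
  classical
  constructor
  · rintro ⟨L, hL, hcov⟩ v
    rcases hL with rfl | hC
    · have hno : ∀ (c : Bool) (a b : V), ¬ G.adj c a b := by
        intro c a b h
        rcases hcov c a b h with h' | h' <;> simp at h'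
      haveI h1 : IsEmpty {u : V // G.adj false v u} := ⟨fun ⟨u, hu⟩ => hno _ _ _ hu⟩
      haveI h2 : IsEmpty {u : V // G.adj true v u} := ⟨fun ⟨u, hu⟩ => hno _ _ _ hu⟩
      simp
    · have hC' := EBAux.CTL_iff.1 hC
      obtain ⟨a, t, rfl⟩ := List.exists_cons_of_ne_nil hC'.1
      obtain ⟨-, hadjL, hch, hnd, hwrap⟩ := hC'
      have hw := hwrap ((a :: t).getLast (by simp))
        (by rw [List.getLast?_eq_getLast_of_ne_nil (by simp)]; rfl) a rfl
      have hlo := EBAux.steps_loopless hadjL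
      have hkey : ∀ d : Bool, EBAux.nbr G d v = (EBAux.atL (a :: t) v d).toFinset := by
        intro d
        apply Finset.Subset.antisymm
        · intro u hu
          rw [EBAux.mem_nbr] at hu
          rw [List.mem_toFinset]
          rw [EBAux.mem_atL hlo]
          rcases hcov d v u hu with h' | h'
          · exact List.mem_map.2 ⟨(v, d, u), h', rfl⟩
          · refine List.mem_map.2 ⟨(u, d, v), h', ?_⟩
            show (d, Sym2.mk u v) = (d, Sym2.mk v u)
            rw [Sym2.eq_swap]
        · intro u hu
          exact EBAux.atL_subset_nbr hadjL v d u (List.mem_toFinset.1 hu)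
      rw [EBAux.natcard_nbr, EBAux.natcard_nbr, hkey false, hkey true,
        List.toFinset_card_of_nodup (EBAux.nodup_atL hlo hnd v false),
        List.toFinset_card_of_nodup (EBAux.nodup_atL hlo hnd v true),
        ← EBAux.tc_eq_length_atL, ← EBAux.tc_eq_length_atL]
      have := EBAux.tc_closed_balance hch hw hlo v false
      simpa using this
  · intro hbal
    have hB : EBAux.Balanced G := by
      intro x d
      have h := hbal x
      rw [EBAux.natcard_nbr, EBAux.natcard_nbr] at h
      cases d
      · simpa using h
      · simpa using h.symm
    obtain ⟨L', hL', hcov⟩ :=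
      EBAux.grow hconn hB (EBAux.uncov G []).card [] (Or.inl rfl) le_rfl
    refine ⟨L', ?_, ?_⟩
    · rcases hL' with rfl | hC
      · exact Or.inl rfl
      · exact Or.inr (EBAux.CTL_iff.2 hC)
    · intro c u v h
      obtain ⟨s, hs, he⟩ := List.mem_map.1 (hcov c u v h)
      rcases s with ⟨p, q, r⟩
      have hq : q = c := congrArg Prod.fst he
      have h2 : Sym2.mk p r = Sym2.mk u v := congrArg Prod.snd he
      rw [Sym2.eq_iff] at h2
      rcases h2 with ⟨hp, hr⟩ | ⟨hp, hr⟩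
      · left; rw [← hp, ← hr, ← hq]; exact hs
      · right; rw [← hp, ← hr, ← hq]; exact hs
end

section
/- Let C1 and C2 be vertex-disjoint alternating cycles in a 2-edge-coloured graph G. If there exist vertices x on C1 and y on C2 that are similar (i.e., x and y are adjacent to exactly the same vertices and with the same edge colours), then G contains an alternating cycle C with V(C) = V(C1) ∪ V(C2). -/
open TwoEC in
/-- Two vertices are similar: non-adjacent, and joined to exactly the same
vertices with the same colours. -/
def TwoEC.Similar {V : Type} (G : TwoEC V) (x y : V) : Prop :=
  (∀ c, ¬ G.adj c x y) ∧ ∀ c (w : V), G.adj c x w ↔ G.adj c y w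


namespace TwoEC

variable {V : Type} {G : TwoEC V}

/-- The alternation relation between consecutive steps. -/
abbrev StepRel (s t : Step V) : Prop := stepTgt s = stepSrc t ∧ stepCol s ≠ stepCol t

lemma map_stepTgt_eq : ∀ {L : List (Step V)} {v : V},
    L.Chain' (fun s t => stepTgt s = stepSrc t ∧ stepCol s ≠ stepCol t) →
    L.getLast?.map stepTgt = some v →
    L.map stepTgt = (L.map stepSrc).tail ++ [v]
  | [], v, _, hl => by simp at hl
  | [s], v, _, hl => by
      simp only [List.getLast?_singleton, Option.map_some, Option.some.injEq] at hl
      simp [hl]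
  | s :: t :: M, v, hc, hl => by
      obtain ⟨⟨h1, _⟩, hc'⟩ := List.isChain_cons_cons.1 hc
      have ih := map_stepTgt_eq hc' (by rwa [List.getLast?_cons_cons] at hl)
      simp only [List.map_cons, List.tail_cons] at ih ⊢
      rw [ih, h1, List.cons_append]

lemma visits_iff_mem_src {L : List (Step V)} (h : G.IsAltCycle L) (w : V) :
    visits L w ↔ w ∈ L.map stepSrc := by
  obtain ⟨⟨u, hne, hh, hl, _, hc⟩, _, _⟩ := h
  have htgt := map_stepTgt_eq hc hl
  cases L with
  | nil => exact absurd rfl hne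
  | cons s M =>
    simp only [List.head?_cons, Option.map_some, Option.some.injEq] at hh
    unfold visits
    rw [htgt]
    simp only [List.map_cons, List.tail_cons, List.mem_append, List.mem_singleton,
      List.mem_cons, ← hh, List.not_mem_nil, or_false]
    tauto

lemma rotate_cycle {L₁ M : List (Step V)} {s : Step V}
    (h : G.IsAltCycle (L₁ ++ s :: M)) :
    G.IsAltCycle (s :: (M ++ L₁)) ∧ G.IsAltWalk (stepSrc s) (stepSrc s) (s :: (M ++ L₁)) ∧
    ∀ w, w ∈ (s :: (M ++ L₁)).map stepSrc ↔ w ∈ (L₁ ++ s :: M).map stepSrc := by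
  have hperm : ((s :: (M ++ L₁)).map stepSrc).Perm ((L₁ ++ s :: M).map stepSrc) :=
    ((List.perm_append_comm (l₁ := s :: M) (l₂ := L₁)).map stepSrc)
  obtain ⟨⟨u, hne, hh, hl, hadj, hc⟩, hnd, hcol⟩ := h
  cases L₁ with
  | nil =>
    have hu : stepSrc s = u := by simpa using hh
    subst hu
    rw [List.append_nil]
    exact ⟨⟨⟨stepSrc s, hne, hh, hl, hadj, hc⟩, hnd, hcol⟩, ⟨hne, hh, hl, hadj, hc⟩,
      fun w => Iff.rfl⟩
  | cons t L₁' =>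
    simp only [List.Chain'] at hc
    rw [List.isChain_append] at hc
    obtain ⟨hcA, hcB, hAB⟩ := hc
    obtain ⟨a, ha⟩ : ∃ a, (t :: L₁').getLast? = some a := by
      cases hx : (t :: L₁').getLast? with
      | none => simp at hx
      | some a => exact ⟨a, rfl⟩
    have hjun := hAB a ha s (by simp)
    have hht : stepSrc t = u := by simpa using hh
    obtain ⟨b, hb⟩ : ∃ b, (s :: M).getLast? = some b := by
      cases hx : (s :: M).getLast? with
      | none => simp at hx
      | some b => exact ⟨b, rfl⟩
    have hbu : stepTgt b = u := by
      rw [List.getLast?_append, hb] at hl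
      simpa using hl
    have hbc : stepCol b ≠ stepCol t := by
      intro hEq
      apply hcol
      unfold lastColour firstColour
      rw [List.getLast?_append, hb]
      simp [List.cons_append, hEq]
    have hwalk : G.IsAltWalk (stepSrc s) (stepSrc s) (s :: (M ++ (t :: L₁'))) := by
      refine ⟨by simp, by simp, ?_, ?_, ?_⟩
      · show ((s :: M) ++ (t :: L₁')).getLast?.map stepTgt = some (stepSrc s)
        rw [List.getLast?_append, ha]
        simp [hjun.1]
      · intro r hr
        apply hadj
        simp only [List.mem_cons, List.mem_append] at hr ⊢
        tauto
      · show List.Chain' _ ((s :: M) ++ (t :: L₁'))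
        simp only [List.Chain']
        rw [List.isChain_append]
        refine ⟨hcB, hcA, ?_⟩
        intro p hp q hq
        rw [hb] at hp
        simp only [List.head?_cons, Option.mem_def, Option.some.injEq] at hp hq
        subst hp; subst hq
        exact ⟨hbu.trans hht.symm, hbc⟩
    refine ⟨⟨⟨stepSrc s, hwalk⟩, hperm.nodup_iff.mpr hnd, ?_⟩, hwalk, fun w => hperm.mem_iff⟩
    show lastColour ((s :: M) ++ (t :: L₁')) ≠ firstColour _
    unfold lastColour firstColour
    rw [List.getLast?_append, ha]
    simp only [Option.some_or, List.head?_cons, Option.map_some, Ne, Option.some.injEq]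
    exact hjun.2

def revStep (s : Step V) : Step V := (stepTgt s, stepCol s, stepSrc s)

lemma reverse_cycle {L : List (Step V)} {u : V}
    (h : G.IsAltCycle L) (hw : G.IsAltWalk u u L) :
    G.IsAltCycle ((L.map revStep).reverse) ∧ G.IsAltWalk u u ((L.map revStep).reverse) ∧
    firstColour ((L.map revStep).reverse) = lastColour L ∧
    ∀ w, w ∈ ((L.map revStep).reverse).map stepSrc ↔ w ∈ L.map stepSrc := by
  obtain ⟨hne, hh, hl, hadj, hc⟩ := hw
  obtain ⟨-, hnd, hcol⟩ := h
  have hmapsrc : ((L.map revStep).reverse).map stepSrc = (L.map stepTgt).reverse := by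
    rw [List.map_reverse, List.map_map]
    rfl
  have hperm : (L.map stepTgt).Perm (L.map stepSrc) := by
    rw [map_stepTgt_eq hc hl]
    cases L with
    | nil => exact absurd rfl hne
    | cons s M =>
      have hsu : stepSrc s = u := by simpa using hh
      simp only [List.map_cons, List.tail_cons, ← hsu]
      exact List.perm_append_singleton _ _
  have hfc : firstColour ((L.map revStep).reverse) = lastColour L := by
    unfold firstColour lastColour
    rw [List.head?_reverse, List.getLast?_map, Option.map_map]
    rfl
  have hlc : lastColour ((L.map revStep).reverse) = firstColour L := by
    unfold firstColour lastColour
    rw [List.getLast?_reverse, List.head?_map, Option.map_map]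
    rfl
  have hwalk : G.IsAltWalk u u ((L.map revStep).reverse) := by
    refine ⟨by simpa using hne, ?_, ?_, ?_, ?_⟩
    · rw [List.head?_reverse, List.getLast?_map, Option.map_map]
      exact hl
    · rw [List.getLast?_reverse, List.head?_map, Option.map_map]
      exact hh
    · intro r hr
      rw [List.mem_reverse, List.mem_map] at hr
      obtain ⟨t, ht, rfl⟩ := hr
      exact G.symm _ _ _ (hadj t ht)
    · simp only [List.Chain'] at hc ⊢
      rw [List.isChain_reverse, List.isChain_map]
      exact hc.imp fun a b hab => ⟨hab.1.symm, hab.2.symm⟩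
  refine ⟨⟨⟨u, hwalk⟩, ?_, ?_⟩, hwalk, hfc, fun w => ?_⟩
  · rw [hmapsrc, List.nodup_reverse]
    exact hperm.nodup_iff.mpr hnd
  · rw [hfc, hlc]
    exact fun hEq => hcol hEq.symm
  · rw [hmapsrc, List.mem_reverse]
    exact hperm.mem_iff

lemma splice {s₁ s₂ : Step V} {T₁ T₂ : List (Step V)} {x y : V}
    (h₁ : G.IsAltCycle (s₁ :: T₁)) (hw₁ : G.IsAltWalk x x (s₁ :: T₁))
    (h₂ : G.IsAltCycle (s₂ :: T₂)) (hw₂ : G.IsAltWalk y y (s₂ :: T₂))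
    (hcc : stepCol s₁ = stepCol s₂)
    (hdisj : ∀ v, ¬ (v ∈ (s₁ :: T₁).map stepSrc ∧ v ∈ (s₂ :: T₂).map stepSrc))
    (hsim : G.Similar x y) :
    ∃ C, G.IsAltCycle C ∧
      ∀ v, v ∈ C.map stepSrc ↔ v ∈ (s₁ :: T₁).map stepSrc ∨ v ∈ (s₂ :: T₂).map stepSrc := by
  obtain ⟨-, hnd₁, hcol₁⟩ := h₁
  obtain ⟨-, hnd₂, hcol₂⟩ := h₂
  obtain ⟨-, hh₁, hl₁, hadj₁, hc₁⟩ := hw₁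
  obtain ⟨-, hh₂, hl₂, hadj₂, hc₂⟩ := hw₂
  have hx : stepSrc s₁ = x := by simpa using hh₁
  have hy : stepSrc s₂ = y := by simpa using hh₂
  have hT₁ : T₁ ≠ [] := by
    rintro rfl
    exact hcol₁ (by simp [lastColour, firstColour])
  have hT₂ : T₂ ≠ [] := by
    rintro rfl
    exact hcol₂ (by simp [lastColour, firstColour])
  have hxy : x ≠ y := by
    intro hEq
    exact hdisj x ⟨by simp [← hx], by simp [← hy, hEq]⟩
  -- key membership facts for nodup
  have hxs : x ∈ (s₁ :: T₁).map stepSrc := by simp [← hx]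
  have hys : y ∈ (s₂ :: T₂).map stepSrc := by simp [← hy]
  have hxn₂ : x ∉ (s₂ :: T₂).map stepSrc := fun hmem => hdisj x ⟨hxs, hmem⟩
  have hyn₁ : y ∉ (s₁ :: T₁).map stepSrc := fun hmem => hdisj y ⟨hmem, hys⟩
  -- last elements
  obtain ⟨a, ha⟩ : ∃ a, T₁.getLast? = some a := by
    cases hx' : T₁.getLast? with
    | none => exact absurd (List.getLast?_eq_none_iff.mp hx') hT₁
    | some a => exact ⟨a, rfl⟩
  obtain ⟨b, hb⟩ : ∃ b, T₂.getLast? = some b := by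
    cases hx' : T₂.getLast? with
    | none => exact absurd (List.getLast?_eq_none_iff.mp hx') hT₂
    | some b => exact ⟨b, rfl⟩
  have hglc₁ : (s₁ :: T₁).getLast? = some a := by
    cases T₁ with
    | nil => exact absurd rfl hT₁
    | cons t T => rw [List.getLast?_cons_cons]; exact ha
  have hglc₂ : (s₂ :: T₂).getLast? = some b := by
    cases T₂ with
    | nil => exact absurd rfl hT₂
    | cons t T => rw [List.getLast?_cons_cons]; exact hb
  have hax : stepTgt a = x := by rw [hglc₁] at hl₁; simpa using hl₁
  have hby : stepTgt b = y := by rw [hglc₂] at hl₂; simpa using hl₂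
  have hac : stepCol a ≠ stepCol s₁ := by
    intro hEq
    apply hcol₁
    unfold lastColour firstColour
    rw [hglc₁]
    simp [hEq]
  have hbc : stepCol b ≠ stepCol s₂ := by
    intro hEq
    apply hcol₂
    unfold lastColour firstColour
    rw [hglc₂]
    simp [hEq]
  refine ⟨((x, stepCol s₂, stepTgt s₂) :: T₂) ++ ((y, stepCol s₁, stepTgt s₁) :: T₁), ?_, ?_⟩
  · refine ⟨⟨x, ?_, by simp [stepSrc], ?_, ?_, ?_⟩, ?_, ?_⟩
    · simp
    · -- getLast?
      rw [List.getLast?_append]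
      have : ((y, stepCol s₁, stepTgt s₁) :: T₁).getLast? = some a := by
        cases T₁ with
        | nil => exact absurd rfl hT₁
        | cons t T => rw [List.getLast?_cons_cons]; exact ha
      rw [this]
      simp [hax]
    · -- adjacency
      intro r hr
      simp only [List.mem_append, List.mem_cons] at hr
      rcases hr with (rfl | hr) | (rfl | hr)
      · exact (hsim.2 _ _).mpr (hy ▸ hadj₂ s₂ (by simp))
      · exact hadj₂ r (by simp [hr])
      · exact (hsim.2 _ _).mp (hx ▸ hadj₁ s₁ (by simp))
      · exact hadj₁ r (by simp [hr])
    · -- chain'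
      simp only [List.Chain'] at hc₁ hc₂ ⊢
      rw [List.isChain_append]
      refine ⟨?_, ?_, ?_⟩
      · rw [List.isChain_cons] at hc₂ ⊢
        exact ⟨fun z hz => hc₂.1 z hz, hc₂.2⟩
      · rw [List.isChain_cons] at hc₁ ⊢
        exact ⟨fun z hz => hc₁.1 z hz, hc₁.2⟩
      · intro p hp q hq
        have hpb : b = p := by
          rw [show ((x, stepCol s₂, stepTgt s₂) :: T₂).getLast? = some b by
            cases T₂ with
            | nil => exact absurd rfl hT₂
            | cons t T => rw [List.getLast?_cons_cons]; exact hb] at hp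
          simpa using hp
        have hq' : (y, stepCol s₁, stepTgt s₁) = q := by simpa using hq
        subst hpb; subst hq'
        exact ⟨hby, fun hEq => hbc ((show stepCol b = stepCol s₁ from hEq).trans hcc)⟩
    · -- nodup
      rw [List.map_append, List.nodup_append]
      have hnd₁' : ((y, stepCol s₁, stepTgt s₁) :: T₁).map stepSrc = y :: T₁.map stepSrc := by
        simp [stepSrc]
      have hnd₂' : ((x, stepCol s₂, stepTgt s₂) :: T₂).map stepSrc = x :: T₂.map stepSrc := by
        simp [stepSrc]
      rw [hnd₁', hnd₂']
      have hs₁map : (s₁ :: T₁).map stepSrc = x :: T₁.map stepSrc := by simp [hx]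
      have hs₂map : (s₂ :: T₂).map stepSrc = y :: T₂.map stepSrc := by simp [hy]
      rw [hs₁map] at hnd₁ hyn₁ hdisj
      rw [hs₂map] at hnd₂ hxn₂ hdisj
      refine ⟨?_, ?_, ?_⟩
      · exact List.nodup_cons.mpr ⟨fun hmem => hxn₂ (List.mem_cons_of_mem _ hmem),
          (List.nodup_cons.mp hnd₂).2⟩
      · exact List.nodup_cons.mpr ⟨fun hmem => hyn₁ (List.mem_cons_of_mem _ hmem),
          (List.nodup_cons.mp hnd₁).2⟩
      · intro v hv w hv' hvw
        subst hvw
        rcases List.mem_cons.mp hv with rfl | hv2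
        · rcases List.mem_cons.mp hv' with hEq | hv1
          · exact hxy hEq
          · exact (List.nodup_cons.mp hnd₁).1 hv1
        · rcases List.mem_cons.mp hv' with rfl | hv1
          · exact (List.nodup_cons.mp hnd₂).1 hv2
          · exact hdisj v ⟨List.mem_cons_of_mem _ hv1, List.mem_cons_of_mem _ hv2⟩
    · -- colours
      unfold lastColour firstColour
      rw [List.getLast?_append]
      have : ((y, stepCol s₁, stepTgt s₁) :: T₁).getLast? = some a := by
        cases T₁ with
        | nil => exact absurd rfl hT₁
        | cons t T => rw [List.getLast?_cons_cons]; exact ha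
      rw [this]
      simp only [Option.or_some, List.head?_cons, List.head?_append, Option.map_some]
      intro hEq
      exact hac ((Option.some.injEq _ _ ▸ hEq : stepCol a = stepCol (x, stepCol s₂, stepTgt s₂)).trans hcc.symm)
  · intro v
    simp only [List.map_append, List.mem_append, List.map_cons, List.mem_cons, ← hx, ← hy,
      stepSrc]
    tauto

end TwoEC

open TwoEC in
theorem merge_cycles_of_similar_vertices {V : Type} (G : TwoEC V)
    (C₁ C₂ : List (Step V)) (h₁ : G.IsAltCycle C₁) (h₂ : G.IsAltCycle C₂)
    (hdisj : ∀ v : V, ¬ (visits C₁ v ∧ visits C₂ v))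
    (x y : V) (hx : visits C₁ x) (hy : visits C₂ y) (hsim : G.Similar x y) :
    ∃ C, G.IsAltCycle C ∧ ∀ v : V, (visits C v ↔ visits C₁ v ∨ visits C₂ v) := by
  have hx' : x ∈ C₁.map stepSrc := (visits_iff_mem_src h₁ x).1 hx
  have hy' : y ∈ C₂.map stepSrc := (visits_iff_mem_src h₂ y).1 hy
  obtain ⟨s₁, hs₁mem, hs₁⟩ := List.mem_map.mp hx'
  obtain ⟨s₂, hs₂mem, hs₂⟩ := List.mem_map.mp hy'
  obtain ⟨A₁, B₁, rfl⟩ := List.append_of_mem hs₁mem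
  obtain ⟨A₂, B₂, rfl⟩ := List.append_of_mem hs₂mem
  obtain ⟨hcy₁, hwk₁, hmem₁⟩ := rotate_cycle h₁
  obtain ⟨hcy₂, hwk₂, hmem₂⟩ := rotate_cycle h₂
  rw [hs₁] at hwk₁
  rw [hs₂] at hwk₂
  have hdisj' : ∀ v, ¬ (v ∈ (s₁ :: (B₁ ++ A₁)).map stepSrc ∧ v ∈ (s₂ :: (B₂ ++ A₂)).map stepSrc) := by
    intro v ⟨hv1, hv2⟩
    exact hdisj v ⟨(visits_iff_mem_src h₁ v).2 ((hmem₁ v).1 hv1),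
      (visits_iff_mem_src h₂ v).2 ((hmem₂ v).1 hv2)⟩
  by_cases hcc : stepCol s₁ = stepCol s₂
  · obtain ⟨C, hC, hCmem⟩ := splice hcy₁ hwk₁ hcy₂ hwk₂ hcc hdisj' hsim
    refine ⟨C, hC, fun v => ?_⟩
    rw [visits_iff_mem_src hC, hCmem v, visits_iff_mem_src h₁, visits_iff_mem_src h₂,
      ← hmem₁ v, ← hmem₂ v]
  · obtain ⟨hcy₂', hwk₂', hfc₂, hmem₂'⟩ := reverse_cycle hcy₂ hwk₂
    cases hE : ((s₂ :: (B₂ ++ A₂)).map revStep).reverse with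
    | nil => simp at hE
    | cons e T =>
      rw [hE] at hcy₂' hwk₂' hfc₂ hmem₂'
      have hce : stepCol e ≠ stepCol s₂ := by
        intro hEq
        apply hcy₂.2.2
        rw [← hfc₂]
        simp [firstColour, hEq]
      have hcc' : stepCol s₁ = stepCol e := by
        have hbool : ∀ a b c : Bool, a ≠ c → b ≠ c → a = b := by decide
        exact hbool _ _ _ hcc hce
      have hdisj'' : ∀ v, ¬ (v ∈ (s₁ :: (B₁ ++ A₁)).map stepSrc ∧ v ∈ (e :: T).map stepSrc) := by
        intro v ⟨hv1, hv2⟩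
        exact hdisj' v ⟨hv1, (hmem₂' v).1 hv2⟩
      obtain ⟨C, hC, hCmem⟩ := splice hcy₁ hwk₁ hcy₂' hwk₂' hcc' hdisj'' hsim
      refine ⟨C, hC, fun v => ?_⟩
      rw [visits_iff_mem_src hC, hCmem v, visits_iff_mem_src h₁, visits_iff_mem_src h₂,
        ← hmem₁ v, ← hmem₂ v, ← hmem₂' v]
end

section
/- Let G be a connected 2-edge-coloured graph and let x,y be distinct vertices. For any colours c1,c2 in {1,2}, there is an alternating (x,y)-trail starting with colour c1 and ending with colour c2 in G if and only if there is an alternating (x_1,y_1)-path starting with colour c1 and ending with colour c2 in the auxiliary graph H, where H has vertex set {u_1,u_2 : u ∈ V(G)} ∪ {u_{uv}, v_{uv} : uv ∈ E(G)}, and for each edge uv of colour c in G, H contains edges u_1u_{uv}, u_2u_{uv}, v_1v_{uv}, v_2v_{uv} of colour c and the edge u_{uv}v_{uv} of colour 3−c. -/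
namespace TwoEC

/-- Vertices of the auxiliary graph `H`: `Sum.inl (u, i)` is the vertex `uᵢ`
(`i ∈ {1,2}` encoded by `Bool`), and `Sum.inr ⟨(u, c, e), _⟩` is the vertex
`u_{uv}` where `e = {u,v}` is an edge of `G` of colour `c` with `u ∈ e`. -/
def AuxTV {V : Type} (G : TwoEC V) : Type :=
  (V × Bool) ⊕
  {p : V × Bool × Sym2 V // p.1 ∈ p.2.2 ∧ ∃ a b, G.adj p.2.1 a b ∧ p.2.2 = Sym2.mk a b}

/-- One-sided description of the coloured edges of `H`: for each edge `uv` of `G`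
of colour `c`, the edges `u₁u_{uv}, u₂u_{uv}, v₁v_{uv}, v₂v_{uv}` of colour `c`
and the edge `u_{uv}v_{uv}` of colour `3 − c` (i.e. `!c`). -/
def auxTBase {V : Type} (G : TwoEC V) : Bool → AuxTV G → AuxTV G → Prop
  | c, Sum.inl u, Sum.inr p => c = p.1.2.1 ∧ p.1.1 = u.1
  | c, Sum.inr p, Sum.inr q =>
      p.1.2.2 = q.1.2.2 ∧ p.1.2.1 = q.1.2.1 ∧ p.1.1 ≠ q.1.1 ∧ c = !p.1.2.1
  | _, _, _ => False

/-- The auxiliary 2-edge-coloured graph `H` of the trail-to-path reduction. -/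
def auxTrailGraph {V : Type} (G : TwoEC V) : TwoEC (AuxTV G) where
  adj c a b := auxTBase G c a b ∨ auxTBase G c b a
  symm := fun _ _ _ h => h.symm
  loopless := fun c v h => by
    rcases v with u | p
    · rcases h with h | h <;> exact h
    · rcases h with h | h <;> exact h.2.2.1 rfl

end TwoEC

namespace AltTrailAux

attribute [reducible] TwoEC.AuxTV

open TwoEC List

variable {V : Type} {G : TwoEC V}

/-! ### Generic list lemmas -/

lemma mem_map_decomp {α β : Type*} {f : α → β} {l : List α} {b : β} (h : b ∈ l.map f) :
    ∃ A s B, l = A ++ s :: B ∧ f s = b := by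
  obtain ⟨s, hs, rfl⟩ := List.exists_of_mem_map h
  obtain ⟨A, B, rfl⟩ := List.append_of_mem hs
  exact ⟨A, s, B, rfl, rfl⟩

lemma map_dup_decomp {α β : Type*} {f : α → β} : ∀ {l : List α}, ¬ (l.map f).Nodup →
    ∃ A s₁ B s₂ C, l = A ++ s₁ :: B ++ s₂ :: C ∧ f s₁ = f s₂ := by
  intro l h
  induction l with
  | nil => simp at h
  | cons a t ih =>
    rw [List.map_cons, List.nodup_cons] at h
    by_cases hm : f a ∈ t.map f
    · obtain ⟨B, s₂, C, rfl, hf⟩ := mem_map_decomp hm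
      exact ⟨[], a, B, s₂, C, rfl, hf.symm⟩
    · obtain ⟨A, s₁, B, s₂, C, rfl, hf⟩ := ih (fun hn => h ⟨hm, hn⟩)
      exact ⟨a :: A, s₁, B, s₂, C, rfl, hf⟩

lemma chain'_append_overlap {α : Type*} {R : α → α → Prop} {P S : List α} {p s : α}
    (hP : (P ++ [p]).Chain' R) (hS : (s :: S).Chain' R) (hps : R p s) :
    ((P ++ [p]) ++ s :: S).Chain' R := by
  show List.IsChain _ _
  rw [List.isChain_append]
  refine ⟨hP, hS, ?_⟩
  intro a ha b hb
  simp [List.getLast?_append] at ha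
  simp at hb
  subst ha hb
  exact hps

lemma bool_ne_not {b c : Bool} (h : (!c) ≠ b) : b = c := by cases b <;> cases c <;> simp_all

lemma head?_append_cons {α : Type*} (A : List α) (a : α) (l l' : List α) :
    (A ++ a :: l).head? = (A ++ a :: l').head? := by cases A <;> simp

/-! ### Goodness of trails and trail surgery -/

/-- target/colour pair of a step -/
def pf (s : Step V) : V × Bool := (stepTgt s, stepCol s)

/-- A trail is good if no interior (vertex, entering-colour) pair repeats, no interior
visit of `x` enters with colour `!c₁` and no interior visit of `y` enters with colour `c₂`. -/
def Good (x y : V) (c₁ c₂ : Bool) (T : List (Step V)) : Prop :=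
  ((T.dropLast).map pf).Nodup ∧ (x, !c₁) ∉ (T.dropLast).map pf ∧
    (y, c₂) ∉ (T.dropLast).map pf

lemma walk_cut {u v : V} {A B S : List (Step V)} {s₁ s₂ : Step V} (hS : S ≠ [])
    (hW : G.IsAltWalk u v (A ++ s₁ :: (B ++ s₂ :: S)))
    (h1 : stepTgt s₁ = stepTgt s₂) (h2 : stepCol s₁ = stepCol s₂) :
    G.IsAltWalk u v (A ++ s₁ :: S) := by
  obtain ⟨hne, hh, hl, hadj, hch⟩ := hW
  rcases S with _ | ⟨s₀, S'⟩
  · exact absurd rfl hS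
  refine ⟨by simp, ?_, ?_, ?_, ?_⟩
  · rw [head?_append_cons A s₁ (s₀ :: S') (B ++ s₂ :: s₀ :: S')]; exact hh
  · rw [show A ++ s₁ :: s₀ :: S' = (A ++ [s₁]) ++ s₀ :: S' by simp,
      List.getLast?_append_of_ne_nil _ (by simp)]
    rw [show A ++ s₁ :: (B ++ s₂ :: s₀ :: S') = (A ++ s₁ :: B ++ [s₂]) ++ s₀ :: S'
        by simp, List.getLast?_append_of_ne_nil _ (by simp)] at hl
    exact hl
  · intro s hs
    apply hadj
    simp only [List.mem_append, List.mem_cons] at hs ⊢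
    tauto
  · have hpre : (A ++ [s₁]).Chain' (fun s t => stepTgt s = stepSrc t ∧ stepCol s ≠ stepCol t) := by
      refine hch.prefix ⟨B ++ s₂ :: s₀ :: S', by simp⟩
    have hsuf : (s₂ :: s₀ :: S').Chain'
        (fun s t => stepTgt s = stepSrc t ∧ stepCol s ≠ stepCol t) := by
      refine hch.suffix ⟨A ++ s₁ :: B, by simp⟩
    simp only [List.Chain', List.isChain_cons_cons] at hsuf
    have := chain'_append_overlap (P := A) (p := s₁) (s := s₀) (S := S') hpre hsuf.2
      ⟨h1.trans hsuf.1.1, h2 ▸ hsuf.1.2⟩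
    simpa using this

lemma exists_good {x y : V} {c₁ c₂ : Bool}
    (hex : ∃ T, G.IsAltTrail x y T ∧ firstColour T = some c₁ ∧ lastColour T = some c₂) :
    ∃ T, (G.IsAltTrail x y T ∧ firstColour T = some c₁ ∧ lastColour T = some c₂) ∧
      Good x y c₁ c₂ T := by
  classical
  obtain ⟨T, hT⟩ := hex
  suffices h : ∀ n (T : List (Step V)), T.length ≤ n →
      (G.IsAltTrail x y T ∧ firstColour T = some c₁ ∧ lastColour T = some c₂) →
      ∃ T', (G.IsAltTrail x y T' ∧ firstColour T' = some c₁ ∧ lastColour T' = some c₂) ∧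
        Good x y c₁ c₂ T' from h T.length T le_rfl hT
  intro n
  induction n with
  | zero =>
    intro T hlen hT
    obtain ⟨⟨⟨hne, _⟩, _⟩, _⟩ := hT
    simp [List.length_eq_zero_iff.mp (Nat.le_zero.mp hlen)] at hne
  | succ n ih =>
    intro T hlen ⟨htrail, hc1, hc2⟩
    by_cases hg : Good x y c₁ c₂ T
    · exact ⟨T, ⟨htrail, hc1, hc2⟩, hg⟩
    obtain ⟨hwalk, hnd⟩ := htrail
    have hTne : T ≠ [] := hwalk.1
    have hTeq : T.dropLast ++ [T.getLast hTne] = T := List.dropLast_append_getLast hTne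
    set t := T.getLast hTne with ht
    rw [Good, not_and_or, not_and_or] at hg
    rcases hg with hg | hg | hg
    · -- a duplicated interior (vertex, colour) pair: shortcut the middle
      obtain ⟨A, s₁, B, s₂, C, hdec, hf⟩ := map_dup_decomp hg
      have hTdec : T = A ++ s₁ :: (B ++ s₂ :: (C ++ [t])) := by
        rw [← hTeq, hdec]; simp
      have h1 : stepTgt s₁ = stepTgt s₂ := congrArg Prod.fst hf
      have h2 : stepCol s₁ = stepCol s₂ := congrArg Prod.snd hf
      have hwalk' : G.IsAltWalk x y (A ++ s₁ :: (C ++ [t])) :=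
        walk_cut (by simp) (hTdec ▸ hwalk) h1 h2
      have hsub : (A ++ s₁ :: (C ++ [t])).Sublist T := by
        rw [hTdec]
        refine List.Sublist.append_left (List.Sublist.cons₂ _ ?_) A
        exact (List.sublist_cons_self s₂ (C ++ [t])).trans (List.sublist_append_right _ _)
      have hnd' : ((A ++ s₁ :: (C ++ [t])).map stepEdge).Nodup := hnd.sublist (hsub.map _)
      have hfc : firstColour (A ++ s₁ :: (C ++ [t])) = some c₁ := by
        rw [hTdec, firstColour] at hc1
        rw [firstColour, head?_append_cons A s₁ (C ++ [t]) (B ++ s₂ :: (C ++ [t]))]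
        exact hc1
      have hlc : lastColour (A ++ s₁ :: (C ++ [t])) = some c₂ := by
        rw [hTdec, lastColour, show A ++ s₁ :: (B ++ s₂ :: (C ++ [t]))
          = (A ++ s₁ :: B ++ [s₂]) ++ (C ++ [t]) by simp,
          List.getLast?_append_of_ne_nil _ (by simp)] at hc2
        rw [lastColour, show A ++ s₁ :: (C ++ [t]) = (A ++ [s₁]) ++ (C ++ [t]) by simp,
          List.getLast?_append_of_ne_nil _ (by simp)]
        exact hc2
      refine ih _ ?_ ⟨⟨hwalk', hnd'⟩, hfc, hlc⟩
      have := hlen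
      rw [hTdec] at this
      simp only [List.length_append, List.length_cons] at this ⊢
      omega
    · -- an interior visit of x entering with colour !c₁ : drop the prefix
      rw [not_not] at hg
      obtain ⟨A, s₁, B, hdec, hf⟩ := mem_map_decomp hg
      have hTdec : T = A ++ s₁ :: (B ++ [t]) := by rw [← hTeq, hdec]; simp
      obtain ⟨hne0, hh, hl, hadj, hch⟩ := hwalk
      obtain ⟨s₀, S', hS⟩ : ∃ s₀ S', B ++ [t] = s₀ :: S' := by
        cases B <;> exact ⟨_, _, rfl⟩
      have hsuf : (s₁ :: (B ++ [t])).Chain'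
          (fun s t => stepTgt s = stepSrc t ∧ stepCol s ≠ stepCol t) := by
        refine (hTdec ▸ hch).suffix ⟨A, by simp⟩
      rw [hS] at hsuf
      simp only [List.Chain', List.isChain_cons_cons] at hsuf
      have htgt : stepTgt s₁ = x := congrArg Prod.fst hf
      have hcol : stepCol s₁ = !c₁ := congrArg Prod.snd hf
      have hcol0 : stepCol s₀ = c₁ := bool_ne_not (hcol ▸ hsuf.1.2)
      have hwalk' : G.IsAltWalk x y (s₀ :: S') := by
        refine ⟨by simp, ?_, ?_, ?_, hsuf.2⟩
        · simp [← hsuf.1.1, htgt]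
        · rw [← hS]
          rw [hTdec, show A ++ s₁ :: (B ++ [t]) = (A ++ [s₁]) ++ (B ++ [t]) by simp,
            List.getLast?_append_of_ne_nil _ (by simp)] at hl
          exact hl
        · intro s hs
          apply hadj
          rw [hTdec]
          rw [← hS] at hs
          simp only [List.mem_append, List.mem_cons] at hs ⊢
          tauto
      have hsub : (s₀ :: S').Sublist T := by
        rw [hTdec, ← hS, show A ++ s₁ :: (B ++ [t]) = (A ++ [s₁]) ++ (B ++ [t]) by simp]
        exact List.sublist_append_right _ _
      have hnd' : ((s₀ :: S').map stepEdge).Nodup := hnd.sublist (hsub.map _)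
      have hfc : firstColour (s₀ :: S') = some c₁ := by simp [firstColour, hcol0]
      have hlc : lastColour (s₀ :: S') = some c₂ := by
        rw [lastColour, ← hS]
        rw [hTdec, lastColour, show A ++ s₁ :: (B ++ [t]) = (A ++ [s₁]) ++ (B ++ [t]) by simp,
          List.getLast?_append_of_ne_nil _ (by simp)] at hc2
        exact hc2
      refine ih _ ?_ ⟨⟨hwalk', hnd'⟩, hfc, hlc⟩
      have := hlen
      rw [hTdec] at this
      rw [← hS]
      simp only [List.length_append, List.length_cons] at this ⊢
      omega
    · -- an interior visit of y entering with colour c₂ : drop the suffix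
      rw [not_not] at hg
      obtain ⟨A, s₁, B, hdec, hf⟩ := mem_map_decomp hg
      have hTdec : T = A ++ s₁ :: (B ++ [t]) := by rw [← hTeq, hdec]; simp
      obtain ⟨hne0, hh, hl, hadj, hch⟩ := hwalk
      have htgt : stepTgt s₁ = y := congrArg Prod.fst hf
      have hcol : stepCol s₁ = c₂ := congrArg Prod.snd hf
      have hwalk' : G.IsAltWalk x y (A ++ [s₁]) := by
        refine ⟨by simp, ?_, ?_, ?_, ?_⟩
        · rw [show A ++ [s₁] = A ++ s₁ :: ([] : List (Step V)) by simp,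
            head?_append_cons A s₁ [] (B ++ [t]), ← hTdec]
          exact hh
        · simp [htgt]
        · intro s hs
          apply hadj
          rw [hTdec]
          simp only [List.mem_append, List.mem_cons] at hs ⊢
          tauto
        · refine (hTdec ▸ hch).prefix ⟨B ++ [t], by simp⟩
      have hsub : (A ++ [s₁]).Sublist T := by
        rw [hTdec, show A ++ s₁ :: (B ++ [t]) = (A ++ [s₁]) ++ (B ++ [t]) by simp]
        exact List.sublist_append_left _ _
      have hnd' : ((A ++ [s₁]).map stepEdge).Nodup := hnd.sublist (hsub.map _)
      have hfc : firstColour (A ++ [s₁]) = some c₁ := by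
        rw [hTdec, firstColour] at hc1
        rw [firstColour, show A ++ [s₁] = A ++ s₁ :: ([] : List (Step V)) by simp,
          head?_append_cons A s₁ [] (B ++ [t])]
        exact hc1
      have hlc : lastColour (A ++ [s₁]) = some c₂ := by
        simp [lastColour, hcol]
      refine ih _ ?_ ⟨⟨hwalk', hnd'⟩, hfc, hlc⟩
      have := hlen
      rw [hTdec] at this
      simp only [List.length_append, List.length_cons] at this ⊢
      omega

/-! ### The forward construction: building an `H`-path from a good trail -/

lemma bool_three {a b c : Bool} (h1 : a ≠ b) (h2 : a ≠ c) (h3 : b ≠ c) : False := by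
  cases a <;> cases b <;> cases c <;> simp_all

open Classical in
/-- Which copy of an interior vertex to use. -/
noncomputable def flagOf (x y v : V) (seen : List V) : Bool :=
  if v = x ∨ v = y ∨ v ∈ seen then true else false

lemma flagOf_eq_false {x y v : V} {seen : List V} (h : flagOf x y v seen = false) :
    v ≠ x ∧ v ≠ y ∧ v ∉ seen := by
  by_cases hc : v = x ∨ v = y ∨ v ∈ seen
  · rw [flagOf, if_pos hc] at h; exact absurd h (by simp)
  · push_neg at hc; exact hc

lemma flagOf_eq_true {x y v : V} {seen : List V} (h : v = x ∨ v = y ∨ v ∈ seen) :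
    flagOf x y v seen = true := by rw [flagOf, if_pos h]

/-- Build the `H`-path corresponding to a trail. `seen` is the list of interior vertices
already visited, used to choose which of the two copies of a vertex to use. -/
noncomputable def build (G : TwoEC V) (x y : V) :
    AuxTV G → (T : List (Step V)) →
    (∀ s ∈ T, G.adj (stepCol s) (stepSrc s) (stepTgt s)) →
    List V → List (Step (AuxTV G))
  | _, [], _, _ => []
  | prev, (u, c, v) :: rest, h, seen =>
    let e := Sym2.mk u v
    let A : AuxTV G := Sum.inr ⟨(u, c, e), ⟨Sym2.mem_mk_left u v,
      ⟨u, v, @id (G.adj c u v) (h (u, c, v) List.mem_cons_self), rfl⟩⟩⟩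
    let B : AuxTV G := Sum.inr ⟨(v, c, e), ⟨Sym2.mem_mk_right u v,
      ⟨u, v, @id (G.adj c u v) (h (u, c, v) List.mem_cons_self), rfl⟩⟩⟩
    let nb : Bool := cond rest.isEmpty false (flagOf x y v seen)
    (prev, c, A) :: (A, !c, B) :: (B, c, Sum.inl (v, nb)) ::
      build G x y (Sum.inl (v, nb)) rest (fun s hs => h s (List.mem_cons_of_mem _ hs))
        (v :: seen)

lemma build_mem_inl {x y : V} : ∀ (T : List (Step V)) (h) (q : V × Bool) (sn : List V)
    {z : V × Bool}, Sum.inl z ∈ (build G x y (Sum.inl q) T h sn).map stepSrc →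
    z = q ∨ z.1 ∈ (T.dropLast).map stepTgt := by
  intro T
  induction T with
  | nil => intro h q sn z hz; simp [build] at hz
  | cons s rest ih =>
    intro h q sn z hz
    obtain ⟨u, c, v⟩ := s
    simp only [build, List.map_cons, List.mem_cons] at hz
    rcases hz with hz | hz | hz | hz
    · exact Or.inl (by simpa [stepSrc] using hz)
    · simp [stepSrc] at hz
    · simp [stepSrc] at hz
    · rcases rest with _ | ⟨r₀, rest'⟩
      · simp [build] at hz
      · simp only [List.isEmpty_cons, cond_false] at hz
        rcases ih _ _ _ hz with h' | h'
        · right; rw [h']; simp [stepTgt]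
        · right
          simp only [List.dropLast_cons₂, List.map_cons, List.mem_cons]
          exact Or.inr h'

lemma build_mem_inl_false {x y : V} : ∀ (T : List (Step V)) (h) (q : V × Bool) (sn : List V)
    {w : V}, Sum.inl (w, false) ∈ (build G x y (Sum.inl q) T h sn).map stepSrc →
    (w, false) = q ∨ (w ≠ x ∧ w ≠ y ∧ w ∉ sn) := by
  intro T
  induction T with
  | nil => intro h q sn w hz; simp [build] at hz
  | cons s rest ih =>
    intro h q sn w hz
    obtain ⟨u, c, v⟩ := s
    simp only [build, List.map_cons, List.mem_cons] at hz
    rcases hz with hz | hz | hz | hz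
    · exact Or.inl (by simpa [stepSrc] using hz)
    · simp [stepSrc] at hz
    · simp [stepSrc] at hz
    · rcases rest with _ | ⟨r₀, rest'⟩
      · simp [build] at hz
      · simp only [List.isEmpty_cons, cond_false] at hz
        rcases ih _ _ _ hz with h' | h'
        · have hw : w = v := congrArg Prod.fst h'
          have hnb : flagOf x y v sn = false := (congrArg Prod.snd h').symm
          obtain ⟨h1, h2, h3⟩ := flagOf_eq_false hnb
          exact Or.inr ⟨hw ▸ h1, hw ▸ h2, hw ▸ h3⟩
        · exact Or.inr ⟨h'.1, h'.2.1, fun hws => h'.2.2 (List.mem_cons_of_mem _ hws)⟩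

lemma build_mem_inr {x y : V} : ∀ (T : List (Step V)) (h) (q : V × Bool) (sn : List V)
    {r : {p : V × Bool × Sym2 V // p.1 ∈ p.2.2 ∧ ∃ a b, G.adj p.2.1 a b ∧ p.2.2 = Sym2.mk a b}},
    Sum.inr r ∈ (build G x y (Sum.inl q) T h sn).map stepSrc →
    (r.1.2.1, r.1.2.2) ∈ T.map stepEdge := by
  intro T
  induction T with
  | nil => intro h q sn r hz; simp [build] at hz
  | cons s rest ih =>
    intro h q sn r hz
    obtain ⟨u, c, v⟩ := s
    simp only [build, List.map_cons, List.mem_cons] at hz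
    rcases hz with hz | hz | hz | hz
    · simp [stepSrc] at hz
    · simp only [stepSrc] at hz
      injection hz with h'
      subst h'
      simp only [List.map_cons, List.mem_cons]
      exact Or.inl rfl
    · simp only [stepSrc] at hz
      injection hz with h'
      subst h'
      simp only [List.map_cons, List.mem_cons]
      exact Or.inl rfl
    · exact List.mem_cons_of_mem _ (ih _ _ _ hz)

lemma flagOf_true {x y v : V} {seen : List V} (h : flagOf x y v seen = true) :
    v = x ∨ v = y ∨ v ∈ seen := by
  by_cases hc : v = x ∨ v = y ∨ v ∈ seen
  · exact hc
  · rw [flagOf, if_neg hc] at h; exact absurd h (by simp)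

/-- The final vertex of the constructed path. -/
def finV (G : TwoEC V) (y : V) : AuxTV G := Sum.inl (y, false)

lemma build_nodup {x y : V} (c₁ c₂ : Bool) :
    ∀ (T : List (Step V)) (h) (pr : V × Bool) (sp : List (V × Bool)),
    (∀ s ∈ T, stepSrc s ≠ stepTgt s) →
    (T.map stepEdge).Nodup →
    (sp ++ (T.dropLast).map pf).Nodup →
    (x, !c₁) ∉ sp ++ (T.dropLast).map pf →
    (y, c₂) ∉ sp ++ (T.dropLast).map pf →
    pr ≠ (y, false) →
    (pr.2 = false → pr.1 = x ∨ pr.1 ∈ sp.map Prod.fst) →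
    (pr.2 = true → pr.1 ∉ ((T.dropLast).map pf).map Prod.fst) →
    ((build G x y (Sum.inl pr) T h (sp.map Prod.fst)).map stepSrc
      ++ [finV G y]).Nodup := by
  intro T
  induction T with
  | nil => intro h pr sp _ _ _ _ _ _ _ _; simp [build]
  | cons s rest ih =>
    intro h pr sp hne hED hJ hx hy hpr1 hpr2 hpr3
    obtain ⟨u, c, v⟩ := s
    obtain ⟨p1, p2⟩ := pr
    have huv : u ≠ v := hne (u, c, v) (List.mem_cons_self)
    rw [List.map_cons, List.nodup_cons] at hED
    rcases rest with _ | ⟨r₀, rest'⟩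
    · -- single step
      have hbuild : build G x y (Sum.inl (p1, p2)) [(u, c, v)] h (sp.map Prod.fst) =
          [(Sum.inl (p1, p2), c,
            Sum.inr ⟨(u, c, Sym2.mk u v), ⟨Sym2.mem_mk_left u v,
              ⟨u, v, @id (G.adj c u v) (h (u, c, v) List.mem_cons_self), rfl⟩⟩⟩),
          (Sum.inr ⟨(u, c, Sym2.mk u v), ⟨Sym2.mem_mk_left u v,
              ⟨u, v, @id (G.adj c u v) (h (u, c, v) List.mem_cons_self), rfl⟩⟩⟩, !c,
            Sum.inr ⟨(v, c, Sym2.mk u v), ⟨Sym2.mem_mk_right u v,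
              ⟨u, v, @id (G.adj c u v) (h (u, c, v) List.mem_cons_self), rfl⟩⟩⟩),
          (Sum.inr ⟨(v, c, Sym2.mk u v), ⟨Sym2.mem_mk_right u v,
              ⟨u, v, @id (G.adj c u v) (h (u, c, v) List.mem_cons_self), rfl⟩⟩⟩, c,
            Sum.inl (v, false))] := rfl
      rw [hbuild, List.map_cons, List.map_cons, List.map_cons, List.map_nil,
        List.cons_append, List.cons_append, List.cons_append, List.nil_append,
        List.nodup_cons, List.nodup_cons, List.nodup_cons]
      refine ⟨?_, ?_, ?_, List.nodup_singleton _⟩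
      · intro hm
        rcases List.mem_cons.mp hm with hm' | hm'
        · simp [stepSrc] at hm'
        rcases List.mem_cons.mp hm' with hm'' | hm''
        · simp [stepSrc] at hm''
        rw [List.mem_singleton] at hm''
        exact hpr1 (Sum.inl_injective hm'')
      · intro hm
        rcases List.mem_cons.mp hm with hm' | hm'
        · exact huv (congrArg Prod.fst (congrArg Subtype.val (Sum.inr_injective hm')))
        rw [List.mem_singleton] at hm'
        simp [stepSrc, finV] at hm'
      · intro hm
        rw [List.mem_singleton] at hm
        simp [stepSrc, finV] at hm
    · -- at least two steps
      have hbuild : build G x y (Sum.inl (p1, p2)) ((u, c, v) :: r₀ :: rest') h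
          (sp.map Prod.fst) =
          (Sum.inl (p1, p2), c,
            Sum.inr ⟨(u, c, Sym2.mk u v), ⟨Sym2.mem_mk_left u v,
              ⟨u, v, @id (G.adj c u v) (h (u, c, v) List.mem_cons_self), rfl⟩⟩⟩) ::
          (Sum.inr ⟨(u, c, Sym2.mk u v), ⟨Sym2.mem_mk_left u v,
              ⟨u, v, @id (G.adj c u v) (h (u, c, v) List.mem_cons_self), rfl⟩⟩⟩, !c,
            Sum.inr ⟨(v, c, Sym2.mk u v), ⟨Sym2.mem_mk_right u v,
              ⟨u, v, @id (G.adj c u v) (h (u, c, v) List.mem_cons_self), rfl⟩⟩⟩) ::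
          (Sum.inr ⟨(v, c, Sym2.mk u v), ⟨Sym2.mem_mk_right u v,
              ⟨u, v, @id (G.adj c u v) (h (u, c, v) List.mem_cons_self), rfl⟩⟩⟩, c,
            Sum.inl (v, flagOf x y v (sp.map Prod.fst))) ::
          build G x y (Sum.inl (v, flagOf x y v (sp.map Prod.fst))) (r₀ :: rest')
            (fun s hs => h s (List.mem_cons_of_mem _ hs)) (v :: sp.map Prod.fst) := rfl
      rw [hbuild]
      set J' : List (V × Bool) := ((r₀ :: rest').dropLast).map pf with hJ'def
      have hdl : (((u, c, v) :: r₀ :: rest').dropLast).map pf = (v, c) :: J' := by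
        rw [List.dropLast_cons₂, List.map_cons]
        rfl
      rw [hdl] at hJ hx hy hpr3
      have hsplit := List.nodup_append.mp hJ
      have hJr : ((v, c) :: J').Nodup := hsplit.2.1
      have hvcJ : (v, c) ∉ J' := (List.nodup_cons.mp hJr).1
      have hdisj := hsplit.2.2
      have hflagy : (v, flagOf x y v (sp.map Prod.fst)) ≠ (y, false) := by
        intro heq
        have h1 : v = y := congrArg Prod.fst heq
        have h2 : flagOf x y v (sp.map Prod.fst) = false := congrArg Prod.snd heq
        exact (flagOf_eq_false h2).2.1 h1
      rw [List.map_cons, List.map_cons, List.map_cons, List.cons_append,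
        List.cons_append, List.cons_append, List.nodup_cons, List.nodup_cons,
        List.nodup_cons]
      refine ⟨?_, ?_, ?_, ?_⟩
      · -- Sum.inl (p1, p2) not repeated
        intro hmem
        simp only [List.mem_cons, List.mem_append, List.mem_singleton] at hmem
        rcases hmem with hm | hm | hm | hm
        · simp [stepSrc] at hm
        · simp [stepSrc] at hm
        · -- in the recursive part
          cases p2 with
          | false =>
            rcases build_mem_inl_false _ _ _ _ hm with h' | h'
            · have hw : p1 = v := congrArg Prod.fst h'
              have hfl : flagOf x y v (sp.map Prod.fst) = false :=
                (congrArg Prod.snd h').symm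
              obtain ⟨h1, h2, h3⟩ := flagOf_eq_false hfl
              rcases hpr2 rfl with hp | hp
              · exact h1 (by rw [← hw]; exact hp)
              · exact h3 (by rw [← hw]; exact hp)
            · rcases hpr2 rfl with hp | hp
              · exact h'.1 hp
              · exact h'.2.2 (List.mem_cons_of_mem _ hp)
          | true =>
            have hp3 := hpr3 rfl
            simp only [List.map_cons, List.mem_cons] at hp3
            push_neg at hp3
            rcases build_mem_inl _ _ _ _ hm with h' | h'
            · exact hp3.1 (congrArg Prod.fst h')
            · refine hp3.2 ?_
              have heq : ((r₀ :: rest').dropLast).map stepTgt = J'.map Prod.fst := by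
                rw [hJ'def, List.map_map]; rfl
              rw [heq] at h'
              exact h'
        · rcases hm with hm | hm
          · exact hpr1 (Sum.inl_injective hm)
          · simp at hm
      · -- A not repeated
        intro hmem
        simp only [List.mem_cons, List.mem_append, List.mem_singleton] at hmem
        rcases hmem with hm | hm | hm
        · exact huv (congrArg Prod.fst (congrArg Subtype.val (Sum.inr_injective hm)))
        · exact hED.1 (build_mem_inr _ _ _ _ hm)
        · simp [stepSrc, finV] at hm
      · -- B not repeated
        intro hmem
        simp only [List.mem_cons, List.mem_append, List.mem_singleton] at hmem
        rcases hmem with hm | hm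
        · exact hED.1 (build_mem_inr _ _ _ _ hm)
        · simp [stepSrc, finV] at hm
      · -- recursive call
        have hrec := ih (fun s hs => h s (List.mem_cons_of_mem _ hs))
          (v, flagOf x y v (sp.map Prod.fst)) ((v, c) :: sp)
          (fun s hs => hne s (List.mem_cons_of_mem _ hs))
          hED.2 ?_ ?_ ?_ hflagy ?_ ?_
        · simpa using hrec
        · exact ((List.perm_middle (l₁ := sp) (l₂ := J') (a := (v, c)))).nodup hJ
        · intro hc'
          simp only [List.mem_append, List.mem_cons] at hc' hx
          tauto
        · intro hc'
          simp only [List.mem_append, List.mem_cons] at hc' hy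
          tauto
        · intro _
          exact Or.inr (by simp)
        · intro hfl hvm
          obtain ⟨pb, hpb, hpbv⟩ := List.exists_of_mem_map hvm
          have hpb1 : pb.1 = v := hpbv
          obtain ⟨b, rfl⟩ : ∃ b, pb = (v, b) := ⟨pb.2, by rw [← hpb1]⟩
          rcases flagOf_true hfl with hvx | hvy | hvs
          · subst hvx
            have hcne : c ≠ !c₁ := fun hh => hx (by simp [hh])
            have hbne : b ≠ !c₁ := fun hh => hx (by
              subst hh
              simp only [List.mem_append, List.mem_cons]
              exact Or.inr (Or.inr hpb))
            have hbc : b = c := by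
              rw [bool_ne_not (Ne.symm hcne), bool_ne_not (Ne.symm hbne)]
            exact hvcJ (hbc ▸ hpb)
          · subst hvy
            have hcne : c ≠ c₂ := fun hh => hy (by simp [hh])
            have hbne : b ≠ c₂ := fun hh => hy (by
              subst hh
              simp only [List.mem_append, List.mem_cons]
              exact Or.inr (Or.inr hpb))
            have hbc : b = c := by
              cases b <;> cases c <;> cases c₂ <;> simp_all
            exact hvcJ (hbc ▸ hpb)
          · obtain ⟨pb', hpb', hpbv'⟩ := List.exists_of_mem_map hvs
            obtain ⟨b', rfl⟩ : ∃ b', pb' = (v, b') := ⟨pb'.2, by rw [← hpbv']⟩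
            have h1 : b' ≠ c := fun hh =>
              hdisj _ hpb' (v, c) List.mem_cons_self (by rw [hh])
            have h2 : b' ≠ b := fun hh =>
              hdisj _ hpb' (v, b) (List.mem_cons_of_mem _ hpb) (by rw [hh])
            have h3 : c ≠ b := fun hh => hvcJ (hh ▸ hpb)
            exact bool_three h1 h2 h3

lemma build_spec {x y : V} :
    ∀ (T : List (Step V)) (h) (pr : V × Bool) (sn : List V),
    T ≠ [] → T.head?.map stepSrc = some pr.1 →
    T.Chain' (fun s t => stepTgt s = stepSrc t ∧ stepCol s ≠ stepCol t) →
    (build G x y (Sum.inl pr) T h sn) ≠ [] ∧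
    (build G x y (Sum.inl pr) T h sn).head?.map stepSrc = some (Sum.inl pr) ∧
    firstColour (build G x y (Sum.inl pr) T h sn) = firstColour T ∧
    (∀ z, T.getLast?.map stepTgt = some z →
      (build G x y (Sum.inl pr) T h sn).getLast?.map stepTgt = some (finV G z)) ∧
    lastColour (build G x y (Sum.inl pr) T h sn) = lastColour T ∧
    (∀ st ∈ build G x y (Sum.inl pr) T h sn,
      (auxTrailGraph G).adj (stepCol st) (stepSrc st) (stepTgt st)) ∧
    (build G x y (Sum.inl pr) T h sn).Chain'
      (fun s t => stepTgt s = stepSrc t ∧ stepCol s ≠ stepCol t) := by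
  intro T
  induction T with
  | nil => intro h pr sn hne; exact absurd rfl hne
  | cons s rest ih =>
    intro h pr sn _ hh hch
    obtain ⟨u, c, v⟩ := s
    have hpr : u = pr.1 := by simpa [stepSrc] using hh
    have hadj0 : G.adj c u v := @id (G.adj c u v) (h (u, c, v) List.mem_cons_self)
    have huv : u ≠ v := fun he => G.loopless c v (he ▸ hadj0)
    rcases rest with _ | ⟨r₀, rest'⟩
    · have hbuild : build G x y (Sum.inl pr) [(u, c, v)] h sn =
          [(Sum.inl pr, c,
            Sum.inr ⟨(u, c, Sym2.mk u v), ⟨Sym2.mem_mk_left u v,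
              ⟨u, v, @id (G.adj c u v) (h (u, c, v) List.mem_cons_self), rfl⟩⟩⟩),
          (Sum.inr ⟨(u, c, Sym2.mk u v), ⟨Sym2.mem_mk_left u v,
              ⟨u, v, @id (G.adj c u v) (h (u, c, v) List.mem_cons_self), rfl⟩⟩⟩, !c,
            Sum.inr ⟨(v, c, Sym2.mk u v), ⟨Sym2.mem_mk_right u v,
              ⟨u, v, @id (G.adj c u v) (h (u, c, v) List.mem_cons_self), rfl⟩⟩⟩),
          (Sum.inr ⟨(v, c, Sym2.mk u v), ⟨Sym2.mem_mk_right u v,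
              ⟨u, v, @id (G.adj c u v) (h (u, c, v) List.mem_cons_self), rfl⟩⟩⟩, c,
            Sum.inl (v, false))] := rfl
      refine ⟨by simp [hbuild], by rw [hbuild]; rfl, by rw [hbuild]; rfl, ?_, ?_, ?_, ?_⟩
      · intro z hz
        have hvz : v = z := by simpa [stepTgt] using hz
        subst hvz
        rw [hbuild]
        rfl
      · rw [hbuild]
        rfl
      · intro st hst
        rw [hbuild] at hst
        rcases List.mem_cons.mp hst with rfl | hst'
        · exact Or.inl ⟨rfl, hpr⟩
        rcases List.mem_cons.mp hst' with rfl | hst2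
        · exact Or.inl ⟨rfl, rfl, huv, rfl⟩
        rcases List.mem_cons.mp hst2 with rfl | hst3
        · exact Or.inr ⟨rfl, rfl⟩
        · simp at hst3
      · rw [hbuild]
        exact List.IsChain.cons_cons ⟨rfl, by simp [stepCol]⟩
          (List.IsChain.cons_cons ⟨rfl, by simp [stepCol]⟩ (List.isChain_singleton _))
    · have hbuild : build G x y (Sum.inl pr) ((u, c, v) :: r₀ :: rest') h sn =
          (Sum.inl pr, c,
            Sum.inr ⟨(u, c, Sym2.mk u v), ⟨Sym2.mem_mk_left u v,
              ⟨u, v, @id (G.adj c u v) (h (u, c, v) List.mem_cons_self), rfl⟩⟩⟩) ::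
          (Sum.inr ⟨(u, c, Sym2.mk u v), ⟨Sym2.mem_mk_left u v,
              ⟨u, v, @id (G.adj c u v) (h (u, c, v) List.mem_cons_self), rfl⟩⟩⟩, !c,
            Sum.inr ⟨(v, c, Sym2.mk u v), ⟨Sym2.mem_mk_right u v,
              ⟨u, v, @id (G.adj c u v) (h (u, c, v) List.mem_cons_self), rfl⟩⟩⟩) ::
          (Sum.inr ⟨(v, c, Sym2.mk u v), ⟨Sym2.mem_mk_right u v,
              ⟨u, v, @id (G.adj c u v) (h (u, c, v) List.mem_cons_self), rfl⟩⟩⟩, c,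
            Sum.inl (v, flagOf x y v sn)) ::
          build G x y (Sum.inl (v, flagOf x y v sn)) (r₀ :: rest')
            (fun s hs => h s (List.mem_cons_of_mem _ hs)) (v :: sn) := rfl
      have hrel := List.isChain_cons_cons.mp hch
      have hh' : (r₀ :: rest').head?.map stepSrc
          = some ((v, flagOf x y v sn) : V × Bool).1 := by
        simp only [List.head?_cons, Option.map_some]
        rw [← hrel.1.1]
        rfl
      obtain ⟨ihne, ihh, ihfc, ihgl, ihlc, ihadj, ihch⟩ :=
        ih (fun s hs => h s (List.mem_cons_of_mem _ hs)) (v, flagOf x y v sn) (v :: sn)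
          (by simp) hh' hrel.2
      obtain ⟨b₀, btl, hB⟩ := List.exists_cons_of_ne_nil ihne
      have hb₀src : stepSrc b₀ = Sum.inl ((v, flagOf x y v sn) : V × Bool) := by
        rw [hB] at ihh
        simpa using ihh
      have hb₀col : stepCol b₀ = stepCol r₀ := by
        rw [hB] at ihfc
        simpa [firstColour] using ihfc
      refine ⟨by simp [hbuild], by rw [hbuild]; rfl, by rw [hbuild]; rfl, ?_, ?_, ?_, ?_⟩
      · intro z hz
        have := ihgl z (by simpa only [List.getLast?_cons_cons] using hz)
        rw [hB] at this
        rw [hbuild, hB, List.getLast?_cons_cons, List.getLast?_cons_cons,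
          List.getLast?_cons_cons]
        exact this
      · have hlast2 : lastColour ((u, c, v) :: r₀ :: rest') = lastColour (r₀ :: rest') := by
          simp only [lastColour, List.getLast?_cons_cons]
        rw [hlast2, ← ihlc, hbuild, hB]
        simp only [lastColour, List.getLast?_cons_cons]
      · intro st hst
        rw [hbuild] at hst
        rcases List.mem_cons.mp hst with rfl | hst'
        · exact Or.inl ⟨rfl, hpr⟩
        rcases List.mem_cons.mp hst' with rfl | hst2
        · exact Or.inl ⟨rfl, rfl, huv, rfl⟩
        rcases List.mem_cons.mp hst2 with rfl | hst3
        · exact Or.inr ⟨rfl, rfl⟩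
        · exact ihadj st hst3
      · rw [hbuild, hB]
        rw [hB] at ihch
        refine List.IsChain.cons_cons ⟨rfl, by simp [stepCol]⟩
          (List.IsChain.cons_cons ⟨rfl, by simp [stepCol]⟩ (List.IsChain.cons_cons ⟨hb₀src.symm, ?_⟩ ihch))
        rw [hb₀col]
        exact hrel.1.2

lemma forward {x y : V} (hxy : x ≠ y) {c₁ c₂ : Bool}
    (hex : ∃ T, G.IsAltTrail x y T ∧ firstColour T = some c₁ ∧ lastColour T = some c₂) :
    ∃ P, (auxTrailGraph G).IsAltPath (Sum.inl (x, false)) (Sum.inl (y, false)) P ∧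
      firstColour P = some c₁ ∧ lastColour P = some c₂ := by
  obtain ⟨T, ⟨⟨⟨hne, hh, hl, hadj, hch⟩, hnd⟩, hfc, hlc⟩, hgood⟩ := exists_good hex
  have hneq : ∀ s ∈ T, stepSrc s ≠ stepTgt s := fun s hs he =>
    G.loopless (stepCol s) (stepTgt s) (he ▸ hadj s hs)
  obtain ⟨bne, bh, bfc, bgl, blc, badj, bch⟩ :=
    build_spec (x := x) (y := y) T hadj ((x, false) : V × Bool) [] hne hh hch
  refine ⟨build G x y (Sum.inl (x, false)) T hadj [],
    ⟨⟨bne, bh, bgl y hl, badj, bch⟩, ?_⟩, bfc.trans hfc, blc.trans hlc⟩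
  exact build_nodup (G := G) c₁ c₂ T hadj (x, false) []
    hneq hnd hgood.1 hgood.2.1 hgood.2.2
    (fun he => hxy (congrArg Prod.fst he))
    (fun _ => Or.inl rfl)
    (fun h0 => absurd h0 (by simp))

set_option maxHeartbeats 800000 in
lemma backward {y : V} :
    ∀ (n : ℕ) (P : List (Step (AuxTV G))) (u : V) (i : Bool), P.length ≤ n →
    (auxTrailGraph G).IsAltWalk (Sum.inl (u, i)) (finV G y) P →
    ((P.map stepSrc) ++ [finV G y]).Nodup →
    ∃ T, G.IsAltWalk u y T ∧ (T.map stepEdge).Nodup ∧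
      firstColour T = firstColour P ∧ lastColour T = lastColour P ∧
      (∀ s ∈ T, ∀ a, a ∈ Sym2.mk (stepSrc s) (stepTgt s) →
        ∃ st ∈ P, ∃ (r : {p : V × Bool × Sym2 V // p.1 ∈ p.2.2 ∧
            ∃ a b, G.adj p.2.1 a b ∧ p.2.2 = Sym2.mk a b}),
          stepSrc st = Sum.inr r ∧
          r.1 = (a, stepCol s, Sym2.mk (stepSrc s) (stepTgt s))) := by
  intro n
  induction n with
  | zero =>
    intro P u i hlen hW _
    exact absurd (List.length_eq_zero_iff.mp (Nat.le_zero.mp hlen)) hW.1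
  | succ n ih =>
    intro P u i hlen hW hnd
    obtain ⟨hne, hh, hl, hadj, hch⟩ := hW
    obtain ⟨st1, P₂, rfl⟩ := List.exists_cons_of_ne_nil hne
    obtain ⟨s1s, c, s1t⟩ := st1
    have hs1s : s1s = Sum.inl (u, i) := by simpa [stepSrc] using hh
    subst hs1s
    have had1 := hadj _ (List.mem_cons_self)
    rcases s1t with z | p
    · rcases had1 with hb | hb <;> cases hb
    obtain ⟨hc, hp1⟩ : c = p.1.2.1 ∧ p.1.1 = u := by
      rcases had1 with hb | hb
      · exact hb
      · cases hb
    rcases P₂ with _ | ⟨st2, P₃⟩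
    · simp [finV, stepTgt] at hl
    obtain ⟨s2s, c2, s2t⟩ := st2
    have hrel12 := (List.isChain_cons_cons.mp hch).1
    have hch2 := (List.isChain_cons_cons.mp hch).2
    have hs2s : s2s = Sum.inr p := by
      have := hrel12.1
      simpa [stepTgt, stepSrc] using this.symm
    subst hs2s
    have hc2ne : c2 ≠ c := by
      have := hrel12.2
      simpa [stepCol] using this.symm
    have had2 := hadj _ (List.mem_cons_of_mem _ (List.mem_cons_self))
    rcases s2t with z | q
    · exfalso
      rcases had2 with hb | hb
      · cases hb
      · obtain ⟨hbc, _⟩ : c2 = p.1.2.1 ∧ p.1.1 = z.1 := hb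
        exact hc2ne (hbc.trans hc.symm)
    obtain ⟨he, hcc, hne', hc2⟩ :
        p.1.2.2 = q.1.2.2 ∧ p.1.2.1 = q.1.2.1 ∧ p.1.1 ≠ q.1.1 ∧ c2 = !p.1.2.1 := by
      rcases had2 with hb | hb
      · exact hb
      · obtain ⟨h1, h2, h3, h4⟩ := hb
        exact ⟨h1.symm, h2.symm, fun hh' => h3 hh'.symm,
          h4.trans (congrArg (! ·) h2)⟩
    rcases P₃ with _ | ⟨st3, P₄⟩
    · simp [finV, stepTgt] at hl
    obtain ⟨s3s, c3, s3t⟩ := st3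
    have hrel23 := (List.isChain_cons_cons.mp hch2).1
    have hch3 := (List.isChain_cons_cons.mp hch2).2
    have hs3s : s3s = Sum.inr q := by
      have := hrel23.1
      simpa [stepTgt, stepSrc] using this.symm
    subst hs3s
    have hc3ne : c3 ≠ c2 := by
      have := hrel23.2
      simpa [stepCol] using this.symm
    have had3 := hadj _ (List.mem_cons_of_mem _ (List.mem_cons_of_mem _
      (List.mem_cons_self)))
    rcases s3t with z | r
    swap
    · exfalso
      rcases had3 with hb | hb
      · obtain ⟨_, _, _, h4⟩ := hb
        exact hc3ne (h4.trans ((congrArg (! ·) hcc.symm).trans hc2.symm))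
      · obtain ⟨h1, h2, _, h4⟩ := hb
        exact hc3ne (h4.trans ((congrArg (! ·) (h2.trans hcc.symm)).trans hc2.symm))
    obtain ⟨hc3, hq1⟩ : c3 = q.1.2.1 ∧ q.1.1 = z.1 := by
      rcases had3 with hb | hb
      · cases hb
      · exact hb
    have hc3c : c3 = c := by rw [hc3, ← hcc, hc]
    -- the underlying edge of G
    have humem : u ∈ q.1.2.2 := by
      rw [← he, ← hp1]
      exact p.2.1
    have huw : u ≠ q.1.1 := fun hh' => hne' (hp1.trans hh')
    have hsym : q.1.2.2 = Sym2.mk u q.1.1 :=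
      (Sym2.mem_and_mem_iff huw).mp ⟨humem, q.2.1⟩
    have hadjuw : G.adj c u q.1.1 := by
      obtain ⟨a, b, hab, habe⟩ := q.2.2
      have : Sym2.mk a b = Sym2.mk u q.1.1 := by rw [← habe, hsym]
      rcases Sym2.eq_iff.mp this with ⟨rfl, rfl⟩ | ⟨rfl, rfl⟩
      · rwa [hc, hcc]
      · apply G.symm
        rwa [hc, hcc]
    rcases P₄ with _ | ⟨st4, P₄'⟩
    · -- base case: the path is exactly one block
      have hz : z = (y, false) := by
        have h' : some ((Sum.inl z : AuxTV G)) = some (finV G y) := hl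
        exact Sum.inl_injective (Option.some_injective _ h')
      have hwy : q.1.1 = y := by rw [hq1, hz]
      refine ⟨[(u, c, q.1.1)], ⟨by simp, by simp [stepSrc], by simp [stepTgt, hwy],
        ?_, List.isChain_singleton _⟩, by simp, rfl,
        by simp [lastColour, stepCol, hc3c], ?_⟩
      · intro s hs
        rw [List.mem_singleton] at hs
        subst hs
        exact hadjuw
      · intro s hs a ha
        rw [List.mem_singleton] at hs
        subst hs
        simp only [stepSrc, stepTgt, stepCol] at ha ⊢
        rcases Sym2.mem_iff.mp ha with rfl | rfl
        · refine ⟨_, List.mem_cons_of_mem _ (List.mem_cons_self), p, rfl, ?_⟩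
          exact Prod.ext hp1 (Prod.ext hc.symm (by rw [he, hsym]))
        · refine ⟨_, List.mem_cons_of_mem _ (List.mem_cons_of_mem _
            (List.mem_cons_self)), q, rfl, ?_⟩
          exact Prod.ext rfl (Prod.ext (by rw [← hcc, ← hc]) hsym)
    · -- recursive case
      have hlen' : (st4 :: P₄').length ≤ n := by
        simp only [List.length_cons] at hlen ⊢
        omega
      have hW₄ : (auxTrailGraph G).IsAltWalk (Sum.inl (z.1, z.2)) (finV G y)
          (st4 :: P₄') := by
        refine ⟨by simp, ?_, ?_, ?_, ?_⟩
        · have := (List.isChain_cons_cons.mp hch3).1.1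
          obtain ⟨s4s, c4, s4t⟩ := st4
          simp only [stepTgt, stepSrc] at this
          simp [stepSrc, ← this]
        · rw [List.getLast?_cons_cons, List.getLast?_cons_cons, List.getLast?_cons_cons] at hl
          exact hl
        · intro s hs
          exact hadj s (by simp [List.mem_cons] at hs ⊢; tauto)
        · exact (List.isChain_cons_cons.mp hch3).2
      have hnd₄ : ((st4 :: P₄').map stepSrc ++ [finV G y]).Nodup := by
        simp only [List.map_cons, List.cons_append, List.nodup_cons] at hnd
        rw [List.map_cons, List.cons_append]
        exact List.nodup_cons.mpr hnd.2.2.2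
      obtain ⟨T₄, hT₄walk, hT₄nd, hT₄fc, hT₄lc, hT₄inv⟩ :=
        ih (st4 :: P₄') z.1 z.2 hlen' hW₄ hnd₄
      obtain ⟨hT₄ne, hT₄h, hT₄l, hT₄adj, hT₄ch⟩ := hT₄walk
      obtain ⟨t₀, tl, rfl⟩ := List.exists_cons_of_ne_nil hT₄ne
      have ht₀src : stepSrc t₀ = z.1 := by simpa using hT₄h
      have ht₀col : stepCol t₀ = stepCol st4 := by
        have h' := hT₄fc
        simp only [firstColour, List.head?_cons, Option.map_some] at h'
        exact Option.some_injective _ h'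
      have hc4ne : stepCol st4 ≠ c3 := by
        have := (List.isChain_cons_cons.mp hch3).1.2
        obtain ⟨s4s, c4, s4t⟩ := st4
        simpa [stepCol] using this.symm
      -- the new step
      refine ⟨(u, c, q.1.1) :: t₀ :: tl, ⟨by simp, by simp [stepSrc], ?_, ?_, ?_⟩,
        ?_, ?_, ?_, ?_⟩
      · rw [List.getLast?_cons_cons]
        exact hT₄l
      · intro s hs
        rcases List.mem_cons.mp hs with rfl | hs'
        · exact hadjuw
        · exact hT₄adj s hs'
      · refine List.IsChain.cons_cons ⟨?_, ?_⟩ hT₄ch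
        · rw [ht₀src, ← hq1]
          rfl
        · exact fun hh' => hc4ne ((ht₀col.symm.trans hh'.symm).trans hc3c.symm)
      · -- Nodup of edges
        rw [List.map_cons, List.nodup_cons]
        refine ⟨?_, hT₄nd⟩
        intro hmem
        obtain ⟨s', hs', hseq⟩ := List.exists_of_mem_map hmem
        have hcols : stepCol s' = c := congrArg Prod.fst hseq
        have hsyms : Sym2.mk (stepSrc s') (stepTgt s') = Sym2.mk u q.1.1 := by
          have := congrArg Prod.snd hseq
          simpa [stepEdge, stepSrc, stepTgt] using this
        have humem' : u ∈ Sym2.mk (stepSrc s') (stepTgt s') := by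
          rw [hsyms]
          exact Sym2.mem_mk_left _ _
        obtain ⟨st', hst', r', hr'eq, hr'val⟩ := hT₄inv s' hs' u humem'
        have hrp : r' = p := by
          apply Subtype.ext
          rw [hr'val, hcols, hsyms, ← hsym, ← he, hc, ← hp1]
        have hmem' : Sum.inr p ∈ (st4 :: P₄').map stepSrc := by
          rw [← hrp, ← hr'eq]
          exact List.mem_map_of_mem hst'
        simp only [List.map_cons, List.cons_append, List.nodup_cons] at hnd
        refine hnd.2.1 (List.mem_cons_of_mem _ ?_)
        rcases List.mem_cons.mp hmem' with h | h
        · rw [h]; exact List.mem_cons_self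
        · exact List.mem_cons_of_mem _ (List.mem_append_left _ h)
      · simp [firstColour, stepCol]
      · have h1 : lastColour ((u, c, q.1.1) :: t₀ :: tl) = lastColour (t₀ :: tl) := by
          simp [lastColour, List.getLast?_cons_cons]
        have h2 : lastColour ((Sum.inl (u, i), c, Sum.inr p) :: (Sum.inr p, c2, Sum.inr q)
            :: (Sum.inr q, c3, Sum.inl z) :: st4 :: P₄')
            = lastColour (st4 :: P₄') := by
          simp [lastColour, List.getLast?_cons_cons]
        rw [h1, h2, hT₄lc]
      · intro s hs a ha
        rcases List.mem_cons.mp hs with rfl | hs'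
        · simp only [stepSrc, stepTgt, stepCol] at ha ⊢
          rcases Sym2.mem_iff.mp ha with rfl | rfl
          · refine ⟨_, List.mem_cons_of_mem _ (List.mem_cons_self), p, rfl, ?_⟩
            exact Prod.ext hp1 (Prod.ext hc.symm (by rw [he, hsym]))
          · refine ⟨_, List.mem_cons_of_mem _ (List.mem_cons_of_mem _
              (List.mem_cons_self)), q, rfl, ?_⟩
            exact Prod.ext rfl (Prod.ext (by rw [← hcc, ← hc]) hsym)
        · obtain ⟨st', hst', r', hr'eq, hr'val⟩ := hT₄inv s hs' a ha
          exact ⟨st', by simp [List.mem_cons] at hst' ⊢; tauto, r', hr'eq, hr'val⟩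

end AltTrailAux

open TwoEC in
theorem altTrail_iff_auxPath {V : Type} (G : TwoEC V) (hconn : G.Connected)
    (x y : V) (hxy : x ≠ y) (c₁ c₂ : Bool) :
    (∃ T, G.IsAltTrail x y T ∧ firstColour T = some c₁ ∧ lastColour T = some c₂) ↔
    (∃ P, (auxTrailGraph G).IsAltPath (Sum.inl (x, false)) (Sum.inl (y, false)) P ∧
      firstColour P = some c₁ ∧ lastColour P = some c₂) := by
  constructor
  · exact fun hex => AltTrailAux.forward hxy hex
  · rintro ⟨P, ⟨hwalk, hnd⟩, hfc, hlc⟩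
    obtain ⟨T, hTwalk, hTnd, hTfc, hTlc, -⟩ :=
      AltTrailAux.backward (G := G) (y := y) P.length P x false le_rfl hwalk hnd
    exact ⟨T, ⟨hTwalk, hTnd⟩, hTfc.trans hfc, hTlc.trans hlc⟩
end
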